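/- arXiv:1402.6130 — 5 statements merged into one kernel-verified Lean document; each statement's English description precedes it below -/
import Mathlib

section
/- Let K be a non-archimedean real closed field and G ⊆ K a value group section of K with respect to the natural valuation. Then (i) G is unbounded above in K: for each x ∈ K there is y ∈ G with y > x; and (ii) G is discrete in K: for each y ∈ G there is ε > 0 in K with (y − ε, y + ε) ∩ G = {y}. -/
open FirstOrder Language FirstOrder.Ring

/-- A linearly ordered field is real closed. -/
def IsRealClosedField (K : Type*) [Field K] [LinearOrder K] [IsStrictOrderedRing K] : Prop :=
  (∀ x : K, 0 ≤ x → ∃ y : K, y ^ 2 = x) ∧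
    ∀ p : Polynomial K, Odd p.natDegree → ∃ x : K, p.eval x = 0

/-- Relative algebraic closure of ℚ(a) in K. -/
def RC (K : Type*) [Field K] (a : Set K) : Set K :=
  {x : K | IsAlgebraic (Subfield.closure a) x}

/-- The language of ordered rings. -/
def ORLang : Language := Language.ring.sum Language.order

noncomputable instance ORLang.structure (K : Type*) [Field K] [LinearOrder K] [IsStrictOrderedRing K] :
    ORLang.Structure K :=
  letI : Language.ring.Structure K := (compatibleRingOfRing K).toStructure
  letI : Language.order.Structure K := orderStructure K
  Language.sumStructure _ _ K

/-- Two tuples realize the same first-order type in the language of ordered rings. -/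
def SameType {K : Type*} [Field K] [LinearOrder K] [IsStrictOrderedRing K] {n : ℕ} (v w : Fin n → K) : Prop :=
  ∀ φ : ORLang.Formula (Fin n), φ.Realize v ↔ φ.Realize w

/-- `I` is an integer part of `K`. -/
structure IsIntegerPart (K : Type*) [Field K] [LinearOrder K] [IsStrictOrderedRing K] (I : Subring K) : Prop where
  one_le_of_pos : ∀ i ∈ I, 0 < i → 1 ≤ i
  round : ∀ x : K, ∃ i ∈ I, i ≤ x ∧ x < i + 1

/-- Positive elements `x`, `y` are archimedean equivalent. -/
def ArchEquiv (K : Type*) [Field K] [LinearOrder K] [IsStrictOrderedRing K] (x y : K) : Prop :=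
  ∃ n : ℕ, x < n * y ∧ y < n * x

/-- `G` is a value group section of `K` (with respect to the natural valuation):
the image of a group embedding of the value group into `(K^{>0}, ·)`, i.e. a subgroup of the
positive multiplicative group meeting each archimedean equivalence class exactly once. -/
structure IsValueGroupSection (K : Type*) [Field K] [LinearOrder K] [IsStrictOrderedRing K] (G : Set K) : Prop where
  pos : ∀ g ∈ G, 0 < g
  one_mem : (1 : K) ∈ G
  mul_mem : ∀ g ∈ G, ∀ h ∈ G, g * h ∈ G
  inv_mem : ∀ g ∈ G, g⁻¹ ∈ G
  existsUnique : ∀ x : K, 0 < x → ∃! g : K, g ∈ G ∧ ArchEquiv K x g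

theorem stmt_5 {K : Type*} [Field K] [LinearOrder K] [IsStrictOrderedRing K] (hK : IsRealClosedField K)
    (hnonarch : ∃ x : K, ∀ n : ℕ, (n : K) < x)
    (G : Set K) (hG : IsValueGroupSection K G) :
    (∀ x : K, ∃ y ∈ G, x < y) ∧
      (∀ y ∈ G, ∃ ε : K, 0 < ε ∧ ∀ z ∈ G, y - ε < z → z < y + ε → z = y) := by
  obtain ⟨ω, hω⟩ := hnonarch
  have hω0 : (0 : K) < ω := by have := hω 0; simpa using this
  constructor
  · intro x
    set x' : K := max x 1 with hx'
    have hx'pos : 0 < x' := lt_of_lt_of_le one_pos (le_max_right x 1)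
    have htpos : 0 < ω * x' := mul_pos hω0 hx'pos
    obtain ⟨g, ⟨hgG, n, h1, h2⟩, _⟩ := hG.existsUnique (ω * x') htpos
    refine ⟨g, hgG, ?_⟩
    have hn0 : 0 < n := by
      rcases Nat.eq_zero_or_pos n with h | h
      · subst h; simp at h1; exact absurd h1 (not_lt.mpr htpos.le)
      · exact h
    have hnx : (n : K) * x' < ω * x' :=
      mul_lt_mul_of_pos_right (hω n) hx'pos
    have : (n : K) * x' < (n : K) * g := lt_trans hnx h1
    have hgx' : x' < g := lt_of_mul_lt_mul_left this (Nat.cast_nonneg n)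
    exact lt_of_le_of_lt (le_max_left x 1) hgx'
  · intro y hy
    have hy0 : 0 < y := hG.pos y hy
    refine ⟨y / 2, half_pos hy0, ?_⟩
    intro z hz h1 h2
    have hz0 : 0 < z := hG.pos z hz
    obtain ⟨g, hgspec, huniq⟩ := hG.existsUnique y hy0
    have hzspec : z ∈ G ∧ ArchEquiv K y z := by
      refine ⟨hz, 2, ?_, ?_⟩
      · push_cast
        nlinarith
      · push_cast
        nlinarith
    have hyspec : y ∈ G ∧ ArchEquiv K y y := by
      refine ⟨hy, 2, ?_, ?_⟩ <;> · push_cast; nlinarith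
    rw [huniq z hzspec, huniq y hyspec]
end

section
/- Let K be a real closed field and K' a dense real closed subfield of K. Then every integer part of K' is also an integer part of K. -/
open FirstOrder Language FirstOrder.Ring

/-- A linearly ordered field is real closed. -/
def IsRealClosedOrd (K : Type*) [Field K] [LinearOrder K] [IsStrictOrderedRing K] : Prop :=
  (∀ x : K, 0 ≤ x → ∃ y : K, y ^ 2 = x) ∧
    ∀ p : Polynomial K, Odd p.natDegree → ∃ x : K, p.eval x = 0

theorem stmt_12 {K : Type*} [Field K] [LinearOrder K] [IsStrictOrderedRing K] (hK : IsRealClosedOrd K)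
    (K' : Subfield K) (hK' : IsRealClosedOrd K')
    (hdense : ∀ x y : K, x < y → ∃ z ∈ K', x < z ∧ z < y)
    (I : Subring K') (hI : IsIntegerPart K' I) :
    IsIntegerPart K (I.map K'.subtype) := by
  constructor
  · rintro _ ⟨i, hi, rfl⟩ hpos
    have h1 : (1 : K') ≤ i := hI.one_le_of_pos i hi (by exact_mod_cast hpos)
    exact_mod_cast h1
  · intro x
    obtain ⟨z, hz, hz1, hz2⟩ := hdense (x - 1) x (by linarith)
    obtain ⟨i, hiI, hi1, hi2⟩ := hI.round ⟨z, hz⟩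
    have hi1' : (i : K) ≤ z := hi1
    have hi2' : (z : K) < (i : K) + 1 := by exact_mod_cast hi2
    by_cases hc : x < (i : K) + 1
    · exact ⟨i, ⟨i, hiI, rfl⟩, by linarith, hc⟩
    · refine ⟨(i : K') + 1, ⟨i + 1, I.add_mem hiI I.one_mem, rfl⟩, not_lt.1 hc, ?_⟩
      push_cast
      linarith
end

section
/- Let M be an o-minimal, countable ω-homogeneous structure such that dcl(a) is bounded above in M for every finite a ⊆ M. Then no unbounded discrete subset X ⊆ M has a support: for every finite a ⊆ M there is an automorphism of M fixing a pointwise that does not map X onto X. -/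
open FirstOrder Language

/-- The image of `x : M` in `WithBot (WithTop M)`, the order `M` extended by `±∞`. -/
def toInf {M : Type*} (x : M) : WithBot (WithTop M) := ((x : WithTop M) : WithBot (WithTop M))

/-- `M` is o-minimal: every subset of `M` definable with parameters is a finite union of
points and open intervals with endpoints in `M ∪ {±∞}`. -/
def IsOMinimalStructure (L : Language) (M : Type*) [L.Structure M] [LinearOrder M] : Prop :=
  ∀ s : Set M, (Set.univ : Set M).Definable₁ L s →
    ∃ (P : Finset M) (Iv : Finset (WithBot (WithTop M) × WithBot (WithTop M))),
      s = ↑P ∪ ⋃ p ∈ Iv, {x : M | p.1 < toInf x ∧ toInf x < p.2}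

/-- The definable closure of `A` in `M`. -/
def dclSet (L : Language) {M : Type*} [L.Structure M] (A : Set M) : Set M :=
  {x : M | A.Definable₁ L {x}}

/-- Two tuples realize the same first-order type. -/
def SameTypeL (L : Language) {M : Type*} [L.Structure M] {n : ℕ} (v w : Fin n → M) : Prop :=
  ∀ φ : L.Formula (Fin n), φ.Realize v ↔ φ.Realize w

/-- `M` is ω-homogeneous. -/
def OmegaHom (L : Language) (M : Type*) [L.Structure M] : Prop :=
  ∀ (n : ℕ) (v w : Fin n → M), SameTypeL L v w →
    ∀ c : M, ∃ d : M, SameTypeL L (Fin.snoc v c) (Fin.snoc w d)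


namespace StmtAux
open Set
variable {L : Language} {M : Type*} [L.Structure M]


variable {L : Language} {M : Type*} [L.Structure M] [LinearOrder M]

theorem toInf_lt_toInf {x y : M} : toInf x < toInf y ↔ x < y := by simp [toInf]
theorem toInf_le_toInf {x y : M} : toInf x ≤ toInf y ↔ x ≤ y := by simp [toInf]
theorem toInf_lt_top (x : M) : toInf x < ((⊤ : WithTop M) : WithBot (WithTop M)) := by
  simp only [toInf, WithBot.coe_lt_coe]; exact WithTop.coe_lt_top x
theorem not_toInf_lt_bot (x : M) : ¬ (toInf x < ⊥) := by simp

theorem wbt_cases (q : WithBot (WithTop M)) :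
    q = ⊥ ∨ q = ((⊤ : WithTop M) : WithBot (WithTop M)) ∨ ∃ m : M, q = toInf m := by
  induction q using WithBot.recBotCoe with
  | bot => exact Or.inl rfl
  | coe q =>
    induction q using WithTop.recTopCoe with
    | top => exact Or.inr (Or.inl rfl)
    | coe m => exact Or.inr (Or.inr ⟨m, rfl⟩)

theorem toInf_inj {x y : M} (h : toInf x = toInf y) : x = y := by
  simpa [toInf] using h

/-- Dichotomy: a definable set is bounded above, or its complement is. -/
theorem dichotomy [Nonempty M] (homin : IsOMinimalStructure L M)
    (hnm : ∀ x : M, ∃ y, x < y) {S : Set M}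
    (hS : (Set.univ : Set M).Definable₁ L S) : BddAbove S ∨ BddAbove Sᶜ := by
  obtain ⟨P, Iv, hdec⟩ := homin S hS
  by_cases hex : ∃ p ∈ Iv, p.2 = ((⊤ : WithTop M) : WithBot (WithTop M)) ∧
      ∃ x : M, p.1 < toInf x ∧ toInf x < p.2
  · obtain ⟨p, hp, hp2, x0, hx1, hx2⟩ := hex
    right
    refine ⟨x0, fun z hz => ?_⟩
    by_contra hzx
    push_neg at hzx
    apply hz
    rw [hdec]
    refine Or.inr (Set.mem_biUnion hp ⟨lt_trans hx1 (toInf_lt_toInf.mpr hzx), ?_⟩)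
    rw [hp2]; exact toInf_lt_top z
  · left
    classical
    set ext : WithBot (WithTop M) × WithBot (WithTop M) → M :=
      fun p => if h : ∃ m : M, p.2 = toInf m then h.choose else Classical.arbitrary M with hext
    have hextEq : ∀ (p : WithBot (WithTop M) × WithBot (WithTop M)) (m : M),
        p.2 = toInf m → ext p = m := by
      intro p m hm
      have hex' : ∃ m' : M, p.2 = toInf m' := ⟨m, hm⟩
      show (if h : ∃ m' : M, p.2 = toInf m' then h.choose else Classical.arbitrary M) = m
      rw [dif_pos hex']
      exact toInf_inj ((hex'.choose_spec.symm).trans hm)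
    obtain ⟨t, ht⟩ := (Finset.finite_toSet (P ∪ Iv.image ext)).bddAbove
    refine ⟨t, fun x hx => ?_⟩
    rw [hdec] at hx
    rcases hx with hx | hx
    · exact ht (by simp [hx])
    · obtain ⟨p, hp, hx1, hx2⟩ := Set.mem_iUnion₂.mp hx
      rcases wbt_cases p.2 with h2 | h2 | ⟨m, h2⟩
      · rw [h2] at hx2; exact absurd hx2 (not_toInf_lt_bot x)
      · exact absurd ⟨p, hp, h2, x, hx1, hx2⟩ hex
      · have hm : ext p = m := hextEq p m h2
        have hxm : x < m := toInf_lt_toInf.mp (h2 ▸ hx2)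
        refine le_of_lt (lt_of_lt_of_le hxm (ht ?_))
        simp only [Finset.coe_union, Set.mem_union, Finset.coe_image, Set.mem_image]
        exact Or.inr ⟨p, by simpa using hp, hm⟩

/-- A nonempty definable set bounded above has a least upper bound. -/
theorem lubExists [Nonempty M] [DenselyOrdered M] (homin : IsOMinimalStructure L M)
    (hnm : ∀ x : M, ∃ y, x < y) {S : Set M}
    (hS : (Set.univ : Set M).Definable₁ L S) (hne : S.Nonempty) (hbdd : BddAbove S) :
    ∃ e : M, IsLUB S e := by
  obtain ⟨P, Iv, hdec⟩ := homin S hS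
  obtain ⟨t, ht⟩ := hbdd
  classical
  -- no unbounded interval
  have hnotop : ∀ p ∈ Iv, p.2 = ((⊤ : WithTop M) : WithBot (WithTop M)) →
      ¬ ∃ x : M, p.1 < toInf x ∧ toInf x < p.2 := by
    rintro p hp hp2 ⟨x, hx1, hx2⟩
    obtain ⟨y, hy⟩ := hnm (max x t)
    have hyS : y ∈ S := by
      rw [hdec]
      refine Or.inr (Set.mem_biUnion hp ⟨lt_trans hx1 (toInf_lt_toInf.mpr ?_), ?_⟩)
      · exact lt_of_le_of_lt (le_max_left x t) hy
      · rw [hp2]; exact toInf_lt_top y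
    exact absurd (ht hyS) (not_le.mpr (lt_of_le_of_lt (le_max_right x t) hy))
  -- for every point of S inside an interval, the right endpoint is a real element
  have hmem : ∀ x ∈ S, x ∈ (P : Set M) ∨ ∃ p ∈ Iv, ∃ m : M,
      p.1 < toInf x ∧ toInf x < p.2 ∧ p.2 = toInf m := by
    intro x hx
    rw [hdec] at hx
    rcases hx with hx | hx
    · exact Or.inl hx
    · obtain ⟨p, hp, hx1, hx2⟩ := Set.mem_iUnion₂.mp hx
      rcases wbt_cases p.2 with h2 | h2 | ⟨m, h2⟩
      · rw [h2] at hx2; exact absurd hx2 (not_toInf_lt_bot x)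
      · exact absurd ⟨x, hx1, hx2⟩ (hnotop p hp h2)
      · exact Or.inr ⟨p, hp, m, hx1, hx2, h2⟩
  -- candidate set
  set D : Set M := {d | d ∈ (P : Set M) ∨ ∃ p ∈ Iv, (∃ x : M, p.1 < toInf x ∧ toInf x < p.2) ∧
      p.2 = toInf d} with hD
  set ext : WithBot (WithTop M) × WithBot (WithTop M) → M :=
    fun p => if h : ∃ m : M, p.2 = toInf m then h.choose else Classical.arbitrary M with hext
  have hextEq : ∀ (p : WithBot (WithTop M) × WithBot (WithTop M)) (m : M),
      p.2 = toInf m → ext p = m := by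
    intro p m hm
    have hex' : ∃ m' : M, p.2 = toInf m' := ⟨m, hm⟩
    show (if h : ∃ m' : M, p.2 = toInf m' then h.choose else Classical.arbitrary M) = m
    rw [dif_pos hex']
    exact toInf_inj ((hex'.choose_spec.symm).trans hm)
  have hDfin : D.Finite := by
    apply Set.Finite.subset (Finset.finite_toSet (P ∪ Iv.image ext))
    rintro d (hd | ⟨p, hp, _, hp2⟩)
    · simp [hd]
    · have : ext p = d := hextEq p d hp2
      simp only [Finset.coe_union, Set.mem_union, Finset.coe_image, Set.mem_image]
      exact Or.inr ⟨p, by simpa using hp, this⟩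
  have hDne : D.Nonempty := by
    obtain ⟨x, hx⟩ := hne
    rcases hmem x hx with h | ⟨p, hp, m, hx1, hx2, h2⟩
    · exact ⟨x, Or.inl h⟩
    · exact ⟨m, Or.inr ⟨p, hp, ⟨x, hx1, hx2⟩, h2⟩⟩
  obtain ⟨e, heD, hemax⟩ := Set.Finite.exists_maximalFor id D hDfin hDne
  have hemax' : ∀ d ∈ D, d ≤ e := by
    intro d hd
    rcases le_or_gt d e with h | h
    · exact h
    · exact hemax hd (le_of_lt h)
  have hPsub : (P : Set M) ⊆ S := by
    rw [hdec]; exact Set.subset_union_left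
  have hIsub : ∀ p ∈ Iv, ∀ y : M, p.1 < toInf y → toInf y < p.2 → y ∈ S := by
    intro p hp y h1 h2
    rw [hdec]
    exact Or.inr (Set.mem_biUnion hp ⟨h1, h2⟩)
  refine ⟨e, ?_, ?_⟩
  · -- upper bound
    intro x hx
    rcases hmem x hx with h | ⟨p, hp, m, hx1, hx2, h2⟩
    · exact hemax' x (Or.inl h)
    · have hm : m ∈ D := Or.inr ⟨p, hp, ⟨x, hx1, hx2⟩, h2⟩
      have : x < m := toInf_lt_toInf.mp (h2 ▸ hx2)
      exact le_of_lt (lt_of_lt_of_le this (hemax' m hm))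
  · -- least upper bound
    intro u hu
    by_contra hue
    push_neg at hue
    rcases heD with h | ⟨p, hp, ⟨x0, hx1, hx2⟩, h2⟩
    · exact absurd (hu (hPsub h)) (not_le.mpr hue)
    · obtain ⟨y, huy, hye⟩ := exists_between hue
      have hx0u : x0 ≤ u := hu (hIsub p hp x0 hx1 hx2)
      have hyS : y ∈ S := by
        refine hIsub p hp y (lt_of_lt_of_le hx1 ?_) ?_
        · exact toInf_le_toInf.mpr (le_of_lt (lt_of_le_of_lt hx0u huy))
        · rw [h2]; exact toInf_lt_toInf.mpr hye
      exact absurd (hu hyS) (not_le.mpr huy)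

/-- The set defined by `φ(a, x)` is definable over `range a`. -/
theorem range_snoc_def {n : ℕ} (a : Fin n → M) (φ : L.Formula (Fin (n+1))) :
    (Set.range a).Definable L {v : Fin 1 → M | φ.Realize (Fin.snoc a (v 0))} := by
  classical
  have hBig : (Set.range a).Definable L {w : Fin (n+1) → M | φ.Realize w} :=
    ⟨(L.lhomWithConstants (Set.range a)).onFormula φ, by ext w; simp [LHom.realize_onFormula]⟩
  have hGr : ∀ i : Fin n, (Set.range a).Definable L {w : Fin (n+1) → M | w i.castSucc = a i} :=
    fun i => ⟨Term.equal (Term.var i.castSucc) (Constants.term (L.con ⟨a i, Set.mem_range_self i⟩)),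
      by ext w; simp [Formula.realize_equal, Term.realize_constants]⟩
  have hGraph : (Set.range a).Definable L {w : Fin (n+1) → M | ∀ i : Fin n, w i.castSucc = a i} := by
    have := Set.definable_biInter_finset hGr Finset.univ
    convert this using 1
    ext w; simp
  have himg := (hBig.inter hGraph).image_comp (fun _ : Fin 1 => Fin.last n)
  convert himg using 1
  ext v
  simp only [Set.mem_image, Set.mem_inter_iff, Set.mem_setOf_eq]
  constructor
  · intro hv
    refine ⟨Fin.snoc a (v 0), ⟨hv, fun i => by simp⟩, ?_⟩
    funext i
    have : i = 0 := Subsingleton.elim i 0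
    subst this
    simp [Fin.snoc_last]
  · rintro ⟨w, ⟨hw1, hw2⟩, rfl⟩
    have hwe : w = Fin.snoc a (w (Fin.last n)) := by
      funext i
      induction i using Fin.lastCases with
      | last => simp [Fin.snoc_last]
      | cast i => simp [Fin.snoc_castSucc, hw2 i]
    simpa using hwe ▸ hw1

/-- The set of least upper bounds of a definable set is definable (given a definable order). -/
theorem lub_definable [LinearOrder M] {A : Set M} {S : Set M}
    (hle : A.Definable L {v : Fin 2 → M | v 0 ≤ v 1})
    (hS : A.Definable L {v : Fin 1 → M | v 0 ∈ S}) :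
    A.Definable L {v : Fin 1 → M | IsLUB S (v 0)} := by
  classical
  have h1 : A.Definable L {g : Fin 2 → M | g 0 ∈ S} := by
    have := hS.preimage_comp (fun _ : Fin 1 => (0 : Fin 2))
    convert this using 1
    rfl
  have hbad : A.Definable L {g : Fin 2 → M | g 0 ∈ S ∧ ¬ g 0 ≤ g 1} := by
    have := h1.inter hle.compl
    convert this using 1
    rfl
  have hubc := hbad.image_comp (fun _ : Fin 1 => (1 : Fin 2))
  have hub : A.Definable L {v : Fin 1 → M | v 0 ∈ upperBounds S} := by
    have := hubc.compl
    convert this using 1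
    ext v
    simp only [Set.mem_compl_iff, Set.mem_image, Set.mem_setOf_eq, not_exists]
    constructor
    · rintro hv g ⟨⟨hg1, hg2⟩, rfl⟩
      exact hg2 (hv hg1)
    · intro hv y hy
      by_contra hc
      exact hv (Fin.cons y (fun _ => v 0)) ⟨⟨by simpa using hy, by simpa using hc⟩, by
        funext i
        have : i = 0 := Subsingleton.elim i 0
        subst this
        simp⟩
  have h2 : A.Definable L {g : Fin 2 → M | g 1 ∈ upperBounds S} := by
    have := hub.preimage_comp (fun _ : Fin 1 => (1 : Fin 2))
    convert this using 1
    rfl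
  have hbad2 : A.Definable L {g : Fin 2 → M | g 1 ∈ upperBounds S ∧ ¬ g 0 ≤ g 1} := by
    have := h2.inter hle.compl
    convert this using 1
    rfl
  have hlbc := hbad2.image_comp (fun _ : Fin 1 => (0 : Fin 2))
  have hlb : A.Definable L {v : Fin 1 → M | ∀ u ∈ upperBounds S, v 0 ≤ u} := by
    have := hlbc.compl
    convert this using 1
    ext v
    simp only [Set.mem_compl_iff, Set.mem_image, Set.mem_setOf_eq, not_exists]
    constructor
    · rintro hv g ⟨⟨hg1, hg2⟩, rfl⟩
      exact hg2 (hv _ hg1)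
    · intro hv u hu
      by_contra hc
      exact hv (Fin.cons (v 0) (fun _ => u)) ⟨⟨by simpa using hu, by simpa using hc⟩, by
        funext i
        have : i = 0 := Subsingleton.elim i 0
        subst this
        simp⟩
  have := hub.inter hlb
  convert this using 1
  rfl



/-- Two elements above a bound for `dclSet L A` cannot be separated by an `A`-definable set. -/
theorem distinguish [LinearOrder M] [DenselyOrdered M] [Nonempty M]
    (homin : IsOMinimalStructure L M) (hnm : ∀ x : M, ∃ y, x < y)
    {A : Set M} (hle2 : A.Definable L {v : Fin 2 → M | v 0 ≤ v 1})
    {S : Set M} (hS : A.Definable L {v : Fin 1 → M | v 0 ∈ S})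
    {z b c : M} (hz : ∀ w ∈ dclSet L A, w < z)
    (hb : b ∈ S) (hc : c ∉ S) (hzb : z < b) (hzc : z < c) : False := by
  have hSuniv : (Set.univ : Set M).Definable₁ L S := hS.mono (Set.subset_univ A)
  have hScdef : A.Definable L {v : Fin 1 → M | v 0 ∈ Sᶜ} := by
    have := hS.compl
    convert this using 1
    rfl
  have hScuniv : (Set.univ : Set M).Definable₁ L Sᶜ := hScdef.mono (Set.subset_univ A)
  have main : ∀ (T : Set M), A.Definable L {v : Fin 1 → M | v 0 ∈ T} →
      (Set.univ : Set M).Definable₁ L T → ∀ x : M, x ∈ T → z < x → BddAbove T → False := by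
    intro T hT hTuniv x hxT hzx hbdd
    obtain ⟨e, he⟩ := lubExists homin hnm hTuniv ⟨x, hxT⟩ hbdd
    have hdef := lub_definable hle2 hT
    have heq : {v : Fin 1 → M | IsLUB T (v 0)} = {v : Fin 1 → M | v 0 ∈ ({e} : Set M)} := by
      ext v
      simp only [Set.mem_setOf_eq, Set.mem_singleton_iff]
      exact ⟨fun h => h.unique he, fun h => h ▸ he⟩
    have hedcl : e ∈ dclSet L A := by
      show A.Definable L {v : Fin 1 → M | v 0 ∈ ({e} : Set M)}
      rw [← heq]; exact hdef
    have h1 : z < e := lt_of_lt_of_le hzx (he.1 hxT)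
    exact absurd (hz e hedcl) (not_lt.mpr (le_of_lt h1))
  rcases dichotomy homin hnm hSuniv with hbdd | hbdd
  · exact main S hS hSuniv b hb hzb hbdd
  · exact main Sᶜ hScdef hScuniv c hc hzc hbdd


variable {L : Language} {M : Type*} [L.Structure M]

theorem stSymm {n} {v w : Fin n → M} (h : SameTypeL L v w) : SameTypeL L w v :=
  fun φ => (h φ).symm

/-- One step of the back-and-forth construction. -/
noncomputable def bfStep (hhom : OmegaHom L M) (e : ℕ → M) (k j : ℕ)
    (p : {p : (Fin (k+j) → M) × (Fin (k+j) → M) // SameTypeL L p.1 p.2}) :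
    {p : (Fin (k+j+1) → M) × (Fin (k+j+1) → M) // SameTypeL L p.1 p.2} :=
  if Even j then
    ⟨(Fin.snoc p.1.1 (e (j/2)),
      Fin.snoc p.1.2 (Classical.choose (hhom _ p.1.1 p.1.2 p.2 (e (j/2))))),
      Classical.choose_spec (hhom _ p.1.1 p.1.2 p.2 (e (j/2)))⟩
  else
    ⟨(Fin.snoc p.1.1 (Classical.choose (hhom _ p.1.2 p.1.1 (stSymm p.2) (e (j/2)))),
      Fin.snoc p.1.2 (e (j/2))),
      stSymm (Classical.choose_spec (hhom _ p.1.2 p.1.1 (stSymm p.2) (e (j/2))))⟩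

/-- The back-and-forth sequence of pairs of tuples. -/
noncomputable def bfSeq (hhom : OmegaHom L M) (e : ℕ → M) (k : ℕ)
    (v0 w0 : Fin k → M) (h0 : SameTypeL L v0 w0) :
    ∀ j : ℕ, {p : (Fin (k+j) → M) × (Fin (k+j) → M) // SameTypeL L p.1 p.2}
  | 0 => ⟨(v0, w0), h0⟩
  | (j+1) => bfStep hhom e k j (bfSeq hhom e k v0 w0 h0 j)

theorem bfStep_fst_castSucc (hhom : OmegaHom L M) (e : ℕ → M) (k j : ℕ)
    (p : {p : (Fin (k+j) → M) × (Fin (k+j) → M) // SameTypeL L p.1 p.2}) (i : Fin (k+j)) :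
    (bfStep hhom e k j p).1.1 i.castSucc = p.1.1 i := by
  unfold bfStep; split_ifs <;> simp [Fin.snoc_castSucc]

theorem bfStep_snd_castSucc (hhom : OmegaHom L M) (e : ℕ → M) (k j : ℕ)
    (p : {p : (Fin (k+j) → M) × (Fin (k+j) → M) // SameTypeL L p.1 p.2}) (i : Fin (k+j)) :
    (bfStep hhom e k j p).1.2 i.castSucc = p.1.2 i := by
  unfold bfStep; split_ifs <;> simp [Fin.snoc_castSucc]

theorem bfStep_fst_last (hhom : OmegaHom L M) (e : ℕ → M) (k j : ℕ) (hj : Even j)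
    (p : {p : (Fin (k+j) → M) × (Fin (k+j) → M) // SameTypeL L p.1 p.2}) :
    (bfStep hhom e k j p).1.1 (Fin.last (k+j)) = e (j/2) := by
  unfold bfStep; rw [if_pos hj]; simp [Fin.snoc_last]

theorem bfStep_snd_last (hhom : OmegaHom L M) (e : ℕ → M) (k j : ℕ) (hj : ¬ Even j)
    (p : {p : (Fin (k+j) → M) × (Fin (k+j) → M) // SameTypeL L p.1 p.2}) :
    (bfStep hhom e k j p).1.2 (Fin.last (k+j)) = e (j/2) := by
  unfold bfStep; rw [if_neg hj]; simp [Fin.snoc_last]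

theorem backForth [Countable M] [Nonempty M] (hhom : OmegaHom L M) {k : ℕ}
    (v0 w0 : Fin k → M) (h0 : SameTypeL L v0 w0) :
    ∃ F : M → M, Function.Surjective F ∧ (∀ i, F (v0 i) = w0 i) ∧
      ∀ (m : ℕ) (t : Fin m → M), SameTypeL L t (F ∘ t) := by
  obtain ⟨e, he⟩ := exists_surjective_nat M
  set S := bfSeq hhom e k v0 w0 h0 with hSdef
  have hstep : ∀ j, S (j+1) = bfStep hhom e k j (S j) := fun j => rfl
  have hfst : ∀ (j : ℕ) (i : Fin (k+j)), (S (j+1)).1.1 i.castSucc = (S j).1.1 i := by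
    intro j i; rw [hstep]; exact bfStep_fst_castSucc hhom e k j (S j) i
  have hsnd : ∀ (j : ℕ) (i : Fin (k+j)), (S (j+1)).1.2 i.castSucc = (S j).1.2 i := by
    intro j i; rw [hstep]; exact bfStep_snd_castSucc hhom e k j (S j) i
  have compat1 : ∀ (j j' : ℕ), j ≤ j' → ∀ (i : ℕ) (h1 : i < k+j) (h2 : i < k+j'),
      (S j).1.1 ⟨i, h1⟩ = (S j').1.1 ⟨i, h2⟩ := by
    intro j j' hj
    induction hj with
    | refl => intro i h1 h2; rfl
    | @step j'' hle ih =>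
      intro i h1 h2
      have hle' : j ≤ j'' := hle
      have h3 : i < k + j'' := by omega
      have : (⟨i, h2⟩ : Fin (k+j''+1)) = (⟨i, h3⟩ : Fin (k+j'')).castSucc := rfl
      rw [this, hfst j'' ⟨i, h3⟩]
      exact ih i h1 h3
  have compat2 : ∀ (j j' : ℕ), j ≤ j' → ∀ (i : ℕ) (h1 : i < k+j) (h2 : i < k+j'),
      (S j).1.2 ⟨i, h1⟩ = (S j').1.2 ⟨i, h2⟩ := by
    intro j j' hj
    induction hj with
    | refl => intro i h1 h2; rfl
    | @step j'' hle ih =>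
      intro i h1 h2
      have hle' : j ≤ j'' := hle
      have h3 : i < k + j'' := by omega
      have : (⟨i, h2⟩ : Fin (k+j''+1)) = (⟨i, h3⟩ : Fin (k+j'')).castSucc := rfl
      rw [this, hsnd j'' ⟨i, h3⟩]
      exact ih i h1 h3
  set u : ℕ → M := fun i => (S (i+1)).1.1 ⟨i, by omega⟩ with hudef
  set w : ℕ → M := fun i => (S (i+1)).1.2 ⟨i, by omega⟩ with hwdef
  have hu : ∀ (j i : ℕ) (h1 : i < k + j), u i = (S j).1.1 ⟨i, h1⟩ := by
    intro j i h1
    rcases le_total (i+1) j with h | h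
    · exact compat1 (i+1) j h i (by omega) h1
    · exact (compat1 j (i+1) h i h1 (by omega)).symm
  have hw : ∀ (j i : ℕ) (h1 : i < k + j), w i = (S j).1.2 ⟨i, h1⟩ := by
    intro j i h1
    rcases le_total (i+1) j with h | h
    · exact compat2 (i+1) j h i (by omega) h1
    · exact (compat2 j (i+1) h i h1 (by omega)).symm
  have hsame : ∀ j : ℕ, SameTypeL L (fun i : Fin (k+j) => u i.1) (fun i : Fin (k+j) => w i.1) := by
    intro j
    have h1 : (fun i : Fin (k+j) => u i.1) = (S j).1.1 := funext fun i => by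
      rw [hu j i.1 i.isLt]
    have h2 : (fun i : Fin (k+j) => w i.1) = (S j).1.2 := funext fun i => by
      rw [hw j i.1 i.isLt]
    rw [h1, h2]; exact (S j).2
  have usurj : Function.Surjective u := by
    intro x
    obtain ⟨m, rfl⟩ := he x
    refine ⟨k + 2*m, ?_⟩
    have h1 : k + 2*m < k + (2*m+1) := by omega
    rw [hu (2*m+1) (k+2*m) h1, hstep]
    have : (⟨k+2*m, h1⟩ : Fin (k+(2*m)+1)) = Fin.last (k+2*m) := rfl
    rw [this, bfStep_fst_last hhom e k (2*m) (even_two_mul m)]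
    congr 1; omega
  have wsurj : Function.Surjective w := by
    intro x
    obtain ⟨m, rfl⟩ := he x
    refine ⟨k + (2*m+1), ?_⟩
    have h1 : k + (2*m+1) < k + (2*m+1+1) := by omega
    rw [hw (2*m+1+1) (k+(2*m+1)) h1, hstep]
    have : (⟨k+(2*m+1), h1⟩ : Fin (k+(2*m+1)+1)) = Fin.last (k+(2*m+1)) := rfl
    rw [this, bfStep_snd_last hhom e k (2*m+1) (by simp [Nat.even_add_one, even_two_mul])]
    congr 1; omega
  have ueqw : ∀ i j : ℕ, u i = u j → w i = w j := by
    intro i j hij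
    set N := max i j + 1 with hN
    have hiN : i < k + N := by omega
    have hjN : j < k + N := by omega
    have := hsame N (Term.equal (Term.var ⟨i, hiN⟩) (Term.var ⟨j, hjN⟩))
    simp only [Formula.realize_equal, Term.realize_var] at this
    exact this.mp hij
  refine ⟨fun x => w (Classical.choose (usurj x)), ?_, ?_, ?_⟩
  · intro y
    obtain ⟨i, rfl⟩ := wsurj y
    exact ⟨u i, ueqw _ i (Classical.choose_spec (usurj (u i)))⟩
  · intro i
    have h1 : (i : ℕ) < k + 0 := by omega
    have hv : v0 i = u i.1 := by
      rw [hu 0 i.1 h1]; rfl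
    have hw0 : w0 i = w i.1 := by
      rw [hw 0 i.1 h1]; rfl
    rw [hv, hw0]
    exact ueqw _ i.1 (Classical.choose_spec (usurj (u i.1)))
  · intro m t φ
    have hidx : ∀ i : Fin m, ∃ idx : ℕ, u idx = t i := fun i => usurj (t i)
    choose idx hidx using hidx
    set j := (Finset.univ.sup idx) + 1 with hj
    have hlt : ∀ i : Fin m, idx i < k + j := by
      intro i
      have := Finset.le_sup (f := idx) (Finset.mem_univ i)
      omega
    set g : Fin m → Fin (k+j) := fun i => ⟨idx i, hlt i⟩ with hg
    have := hsame j (φ.relabel g)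
    rw [Formula.realize_relabel, Formula.realize_relabel] at this
    have e1 : ((fun i : Fin (k+j) => u i.1) ∘ g) = t := funext fun i => hidx i
    have e2 : ((fun i : Fin (k+j) => w i.1) ∘ g) =
        (fun x => w (Classical.choose (usurj x))) ∘ t := by
      funext i
      simp only [Function.comp_apply]
      rw [← hidx i]
      exact (ueqw _ (idx i) (Classical.choose_spec (usurj (u (idx i))))).symm
    rw [e1, e2] at this
    exact this



end StmtAux

open StmtAux Set

theorem stmt_13 {L : Language} {M : Type*} [L.Structure M] [LinearOrder M] [DenselyOrdered M]
    (hle : (Set.univ : Set M).Definable L {v : Fin 2 → M | v 0 ≤ v 1})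
    (homin : IsOMinimalStructure L M)
    (hcount : Countable M) (hhom : OmegaHom L M)
    (hdcl : ∀ (n : ℕ) (a : Fin n → M), ∃ z : M, ∀ w ∈ dclSet L (Set.range a), w < z)
    (X : Set M)
    (hunb : ∀ x : M, ∃ y ∈ X, x < y)
    (hdisc : ∀ x ∈ X, ∃ u v : M, u < x ∧ x < v ∧ ∀ z ∈ X, u < z → z < v → z = x) :
    ∀ (n : ℕ) (a : Fin n → M),
      ∃ π : M ≃[L] M, (∀ i, π (a i) = a i) ∧ π '' X ≠ X := by
  intro n a
  haveI : Nonempty M := ⟨(hdcl 0 (fun i => i.elim0)).choose⟩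
  have hnm : ∀ x : M, ∃ y : M, x < y := fun x => by
    obtain ⟨y, _, hy⟩ := hunb x; exact ⟨y, hy⟩
  classical
  -- parameters of the order formula
  obtain ⟨A0, _, hA0⟩ := Set.definable_iff_finitely_definable.mp hle
  set k := A0.card with hk
  set q : Fin k → M := fun i => ((A0.equivFin.symm i : M)) with hq
  set a' : Fin (n + k) → M := Fin.append a q with ha'
  have hra : Set.range a ⊆ Set.range a' := by
    rintro _ ⟨i, rfl⟩
    exact ⟨Fin.castAdd k i, Fin.append_left a q i⟩
  have hrq : (A0 : Set M) ⊆ Set.range a' := by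
    intro x hx
    refine ⟨Fin.natAdd n (A0.equivFin ⟨x, hx⟩), ?_⟩
    rw [ha', Fin.append_right]
    simp [hq]
  obtain ⟨z, hz⟩ := hdcl (n + k) a'
  have hle' : (Set.range a').Definable L {v : Fin 2 → M | v 0 ≤ v 1} := hA0.mono hrq
  -- pick b ∈ X and c ∉ X above z
  obtain ⟨b, hbX, hzb⟩ := hunb z
  obtain ⟨u0, v0, hub, hbv, hXloc⟩ := hdisc b hbX
  obtain ⟨c, hbc, hcv⟩ := exists_between hbv
  have hcX : c ∉ X := fun hc => absurd (hXloc c hc (lt_trans hub hbc) hcv) (ne_of_gt hbc)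
  have hzc : z < c := lt_trans hzb hbc
  -- b and c have the same type over a
  have key : ∀ (φ : L.Formula (Fin (n+1))) (x y : M), z < x → z < y →
      φ.Realize (Fin.snoc a x) → φ.Realize (Fin.snoc a y) := by
    intro φ x y hx hy hreal
    by_contra hny
    exact distinguish homin hnm hle'
      (S := {t : M | φ.Realize (Fin.snoc a t)}) ((range_snoc_def a φ).mono hra)
      hz hreal hny hx hy
  have hsame : SameTypeL L (Fin.snoc a b) (Fin.snoc a c) :=
    fun φ => ⟨key φ b c hzb hzc, key φ c b hzc hzb⟩
  -- back and forth
  obtain ⟨F, hFsurj, hF0, hFtype⟩ := backForth hhom (Fin.snoc a b) (Fin.snoc a c) hsame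
  have hFinj : Function.Injective F := by
    intro x y hxy
    have h := hFtype 2 ![x, y] (Term.equal (Term.var 0) (Term.var 1))
    simp only [Formula.realize_equal, Term.realize_var, Function.comp_apply,
      Matrix.cons_val_zero, Matrix.cons_val_one, Matrix.head_cons] at h
    exact h.mpr hxy
  have hFb : F b = c := by
    have h := hF0 (Fin.last n)
    simpa using h
  refine ⟨⟨Equiv.ofBijective F ⟨hFinj, hFsurj⟩, ?_, ?_⟩, ?_, ?_⟩
  · -- map_fun'
    intro m f x
    have h0 : (Term.equal (Term.func f (fun i => Term.var i.castSucc))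
        (Term.var (Fin.last m))).Realize (Fin.snoc x (Structure.funMap f x) : Fin (m+1) → M) := by
      simp [Formula.realize_equal, Term.realize_func, Term.realize_var,
        Fin.snoc_castSucc, Fin.snoc_last]
    have h1 := (hFtype (m+1) (Fin.snoc x (Structure.funMap f x)) _).mp h0
    rw [Fin.comp_snoc] at h1
    simp only [Formula.realize_equal, Term.realize_func, Term.realize_var,
      Fin.snoc_castSucc, Fin.snoc_last] at h1
    exact h1.symm
  · -- map_rel'
    intro m r x
    have h := hFtype m x (Relations.formula r Term.var)
    simp only [Formula.realize_rel, Term.realize_var] at h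
    exact h.symm
  · -- fixes a
    intro i
    show F (a i) = a i
    calc F (a i) = F ((Fin.snoc a b : Fin (n+1) → M) i.castSucc) := by
          rw [Fin.snoc_castSucc]
      _ = (Fin.snoc a c : Fin (n+1) → M) i.castSucc := hF0 i.castSucc
      _ = a i := by rw [Fin.snoc_castSucc]
  · -- moves X
    intro hEq
    apply hcX
    rw [← hEq]
    exact ⟨b, hbX, hFb⟩
end

section
/- Let M be an o-minimal, countable ω-homogeneous structure such that dcl(a) is bounded above in M for every finite a ⊆ M. If X ⊆ M is unbounded above and its complement M \ X is also unbounded above, then X has no support. -/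
open FirstOrder Language

set_option linter.unusedSectionVars false

namespace OMAux

variable {L : Language} {M : Type*} [L.Structure M]

lemma def_realize_snoc {n : ℕ} (a : Fin n → M) (φ : L.Formula (Fin (n+1))) :
    (Set.range a).Definable L {v : Fin 1 → M | φ.Realize (Fin.snoc a (v 0))} := by
  rw [Set.definable_iff_exists_formula_sum]
  refine ⟨φ.relabel (Fin.snoc (fun i => Sum.inl ⟨a i, ⟨i, rfl⟩⟩) (Sum.inr 0)), ?_⟩
  have key : ∀ v : Fin 1 → M,
      (Sum.elim (Subtype.val : Set.range a → M) v) ∘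
        (Fin.snoc (fun i => Sum.inl ⟨a i, ⟨i, rfl⟩⟩) (Sum.inr 0)) = Fin.snoc a (v 0) := by
    intro v; funext i
    refine Fin.lastCases ?_ (fun j => ?_) i <;> simp
  ext v
  simp only [Set.mem_setOf_eq, Formula.realize_relabel, key]

lemma def_forall_rel {A : Set M} {r : M → M → Prop} {s : Set M}
    (hr : A.Definable L {g : Fin 2 → M | r (g 0) (g 1)})
    (hs : A.Definable L {v : Fin 1 → M | v 0 ∈ s}) :
    A.Definable L {v : Fin 1 → M | ∀ t, r (v 0) t → t ∈ s} := by
  have hs2 : A.Definable L {g : Fin 2 → M | g 1 ∈ s} := by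
    have := hs.preimage_comp (fun _ : Fin 1 => (1 : Fin 2))
    convert this using 1
    rfl
  have hE : A.Definable L {g : Fin 2 → M | r (g 0) (g 1) ∧ g 1 ∉ s} := by
    have := hr.inter hs2.compl
    convert this using 1
    rfl
  have himg := hE.image_comp (fun _ : Fin 1 => (0 : Fin 2))
  have himgeq : (fun g : Fin 2 → M => g ∘ (fun _ : Fin 1 => (0 : Fin 2))) ''
      {g : Fin 2 → M | r (g 0) (g 1) ∧ g 1 ∉ s} = {v : Fin 1 → M | ∃ t, r (v 0) t ∧ t ∉ s} := by
    ext v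
    constructor
    · rintro ⟨g, ⟨h1, h2⟩, rfl⟩
      exact ⟨g 1, h1, h2⟩
    · rintro ⟨t, h1, h2⟩
      refine ⟨![v 0, t], ⟨by simpa using h1, by simpa using h2⟩, ?_⟩
      funext i
      have : i = 0 := Subsingleton.elim _ _
      subst this
      simp
  rw [himgeq] at himg
  have := himg.compl
  convert this using 1
  ext v
  simp only [Set.mem_setOf_eq, Set.mem_compl_iff, not_exists]
  constructor
  · intro h t hc; exact hc.2 (h t hc.1)
  · intro h t ht; by_contra hc; exact (h t) ⟨ht, hc⟩

lemma mem_dcl_of_def {A : Set M} {m : M}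
    (h : A.Definable L {v : Fin 1 → M | v 0 ∈ ({m} : Set M)}) : m ∈ dclSet L A := h

variable {M : Type*} [LinearOrder M]

@[simp] lemma toInf_lt_toInf {a b : M} : toInf a < toInf b ↔ a < b := by
  simp [toInf]

@[simp] lemma bot_lt_toInf (a : M) : (⊥ : WithBot (WithTop M)) < toInf a := by
  simp [toInf]

@[simp] lemma toInf_lt_top (a : M) : toInf a < ((⊤ : WithTop M) : WithBot (WithTop M)) := by
  simpa [toInf] using WithBot.coe_lt_coe.mpr (WithTop.coe_lt_top a)

@[simp] lemma not_top_lt_toInf (a : M) : ¬ ((⊤ : WithTop M) : WithBot (WithTop M)) < toInf a := by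
  simp [toInf]

lemma cases3 (q : WithBot (WithTop M)) :
    q = ⊥ ∨ q = ((⊤ : WithTop M) : WithBot (WithTop M)) ∨ ∃ e : M, q = toInf e := by
  induction q using WithBot.recBotCoe with
  | bot => exact Or.inl rfl
  | coe q =>
    induction q using WithTop.recTopCoe with
    | top => exact Or.inr (Or.inl rfl)
    | coe e => exact Or.inr (Or.inr ⟨e, rfl⟩)

/-- endpoints in `M` of an element of `WithBot (WithTop M)` -/
def epts (q : WithBot (WithTop M)) : Finset M :=
  WithBot.recBotCoe ∅ (fun r => WithTop.recTopCoe ∅ (fun e => {e}) r) q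

@[simp] lemma mem_epts {e : M} {q : WithBot (WithTop M)} : e ∈ epts q ↔ q = toInf e := by
  rcases cases3 q with rfl | rfl | ⟨f, rfl⟩
  · exact ⟨fun h => absurd h (Finset.notMem_empty e), fun h => by simp [toInf] at h⟩
  · exact ⟨fun h => absurd h (Finset.notMem_empty e), fun h => by simp [toInf] at h⟩
  · show e ∈ ({f} : Finset M) ↔ toInf f = toInf e
    simp only [Finset.mem_singleton, toInf, WithBot.coe_inj, WithTop.coe_inj]
    exact eq_comm

lemma finset_bound [Nonempty M] (noMax : ∀ c : M, ∃ d, c < d) (F : Finset M) :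
    ∃ c : M, ∀ w ∈ F, w < c := by
  rcases F.eq_empty_or_nonempty with rfl | hF
  · exact ⟨Classical.arbitrary M, by simp⟩
  · obtain ⟨c, hc⟩ := noMax (F.max' hF)
    exact ⟨c, fun w hw => lt_of_le_of_lt (F.le_max' w hw) hc⟩

lemma eventual {L : Language} [L.Structure M] [Nonempty M] (noMax : ∀ c : M, ∃ d, c < d)
    (homin : IsOMinimalStructure L M) (s : Set M)
    (hs : (Set.univ : Set M).Definable₁ L s) :
    (∃ c, ∀ t, c < t → t ∈ s) ∨ (∃ c, ∀ t, c < t → t ∉ s) := by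
  classical
  obtain ⟨P, Iv, hPIv⟩ := homin s hs
  obtain ⟨c, hc⟩ := finset_bound noMax (P ∪ Iv.sup (fun p => epts p.1 ∪ epts p.2))
  have hcP : ∀ w ∈ P, w < c := fun w hw => hc w (Finset.mem_union_left _ hw)
  have hcE : ∀ p ∈ Iv, ∀ e : M, (p.1 = toInf e ∨ p.2 = toInf e) → e < c := by
    intro p hp e he
    refine hc e (Finset.mem_union_right _ (Finset.mem_sup.mpr ⟨p, hp, ?_⟩))
    rcases he with he | he
    · exact Finset.mem_union_left _ (mem_epts.mpr he)
    · exact Finset.mem_union_right _ (mem_epts.mpr he)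
  by_cases hQ : ∃ p ∈ Iv, p.1 ≠ ((⊤ : WithTop M) : WithBot (WithTop M)) ∧
      p.2 = ((⊤ : WithTop M) : WithBot (WithTop M))
  · left
    obtain ⟨p, hp, hp1, hp2⟩ := hQ
    refine ⟨c, fun t ht => ?_⟩
    rw [hPIv]
    refine Set.mem_union_right _ ?_
    refine Set.mem_biUnion hp ?_
    refine ⟨?_, by rw [hp2]; exact toInf_lt_top t⟩
    rcases cases3 p.1 with h1 | h1 | ⟨e, h1⟩
    · rw [h1]; exact bot_lt_toInf t
    · exact absurd h1 hp1
    · rw [h1, toInf_lt_toInf]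
      exact lt_trans (hcE p hp e (Or.inl h1)) ht
  · right
    refine ⟨c, fun t ht hts => ?_⟩
    rw [hPIv] at hts
    rcases hts with hts | hts
    · exact absurd ht (not_lt_of_gt (hcP t hts))
    · rw [Set.mem_iUnion₂] at hts
      obtain ⟨p, hp, h1, h2⟩ := hts
      rcases cases3 p.2 with hq | hq | ⟨e, hq⟩
      · rw [hq] at h2; exact not_lt_bot h2
      · rcases cases3 p.1 with hq1 | hq1 | ⟨e, hq1⟩
        · exact hQ ⟨p, hp, by rw [hq1]; simp, hq⟩
        · rw [hq1] at h1; exact not_top_lt_toInf t h1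
        · exact hQ ⟨p, hp, by rw [hq1]; simp [toInf], hq⟩
      · rw [hq, toInf_lt_toInf] at h2
        exact absurd ht (not_lt_of_gt (lt_trans h2 (hcE p hp e (Or.inr hq))))

lemma cut {L : Language} [L.Structure M] (homin : IsOMinimalStructure L M)
    (U : Set M) (hU : (Set.univ : Set M).Definable₁ L U)
    (hup : ∀ c c' : M, c ∈ U → c ≤ c' → c' ∈ U)
    (hne : U.Nonempty) (hcne : Uᶜ.Nonempty) :
    (∃ m ∈ U, ∀ c, c < m → c ∉ U) ∨ (∃ m, m ∉ U ∧ ∀ c, m < c → c ∈ U) := by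
  classical
  by_contra hcon
  push_neg at hcon
  obtain ⟨h1, h2⟩ := hcon
  obtain ⟨P, Iv, hPIv⟩ := homin U hU
  have claim : ∀ u ∈ U, ∃ e, (e ∈ P ∪ Iv.sup (fun p => epts p.1)) ∧ e ∈ U ∧ e ≤ u := by
    intro u hu
    have hu' := hu
    rw [hPIv] at hu'
    rcases hu' with huP | huI
    · exact ⟨u, Finset.mem_union_left _ huP, hu, le_rfl⟩
    · rw [Set.mem_iUnion₂] at huI
      obtain ⟨p, hp, hp1, hp2⟩ := huI
      rcases cases3 p.1 with hq | hq | ⟨e, hq⟩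
      · exfalso
        obtain ⟨d, hd⟩ := hcne
        apply hd
        rcases le_or_gt u d with h | h
        · exact hup u d hu h
        · rw [hPIv]; right; rw [Set.mem_iUnion₂]
          exact ⟨p, hp, by rw [hq]; exact bot_lt_toInf d,
            lt_trans (toInf_lt_toInf.mpr h) hp2⟩
      · rw [hq] at hp1; exact absurd hp1 (not_top_lt_toInf u)
      · rw [hq] at hp1
        have heu : e < u := toInf_lt_toInf.mp hp1
        have hsub : ∀ t, e < t → t ∈ U := by
          intro t het
          rcases le_or_gt u t with h | h
          · exact hup u t hu h
          · rw [hPIv]; right; rw [Set.mem_iUnion₂]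
            exact ⟨p, hp, by rw [hq]; exact toInf_lt_toInf.mpr het,
              lt_trans (toInf_lt_toInf.mpr h) hp2⟩
        have heU : e ∈ U := by
          by_contra heU
          obtain ⟨d, hed, hdU⟩ := h2 e heU
          exact hdU (hsub d hed)
        exact ⟨e, Finset.mem_union_right _
          (Finset.mem_sup.mpr ⟨p, hp, mem_epts.mpr hq⟩), heU, le_of_lt heu⟩
  obtain ⟨u, hu⟩ := hne
  obtain ⟨e0, he0E, he0U, _⟩ := claim u hu
  have hGne : ((P ∪ Iv.sup (fun p => epts p.1)).filter (· ∈ U)).Nonempty :=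
    ⟨e0, Finset.mem_filter.mpr ⟨he0E, he0U⟩⟩
  set m := ((P ∪ Iv.sup (fun p => epts p.1)).filter (· ∈ U)).min' hGne with hm
  have hmU : m ∈ U := (Finset.mem_filter.mp (Finset.min'_mem _ hGne)).2
  obtain ⟨c, hcm, hcU⟩ := h1 m hmU
  obtain ⟨e, heE, heU, hec⟩ := claim c hcU
  have hme : m ≤ e := Finset.min'_le _ e (Finset.mem_filter.mpr ⟨heE, heU⟩)
  exact absurd (lt_of_le_of_lt hec hcm) (not_lt_of_ge hme)

lemma mem_of_eventually {L : Language} [L.Structure M] [DenselyOrdered M] [Nonempty M]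
    (noMax : ∀ c : M, ∃ d, c < d) (homin : IsOMinimalStructure L M)
    {A : Set M} (hltA : A.Definable L {g : Fin 2 → M | g 0 < g 1})
    (hgtA : A.Definable L {g : Fin 2 → M | g 1 < g 0})
    {x z : M} (hx : ∀ w ∈ dclSet L A, w < x) (hzx : z < x)
    {s : Set M} (hs : A.Definable L {v : Fin 1 → M | v 0 ∈ s})
    (hev : ∃ c, ∀ t, c < t → t ∈ s) : x ∈ s := by
  set U : Set M := {c | ∀ t, c < t → t ∈ s} with hUdef
  have hDU : A.Definable L {v : Fin 1 → M | v 0 ∈ U} := def_forall_rel hltA hs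
  have hDUc : A.Definable L {v : Fin 1 → M | v 0 ∈ Uᶜ} := by
    have := hDU.compl
    convert this using 1
    rfl
  have hup : ∀ c c' : M, c ∈ U → c ≤ c' → c' ∈ U :=
    fun c c' hc hcc' t ht => hc t (lt_of_le_of_lt hcc' ht)
  have hne : U.Nonempty := hev
  rcases Set.eq_empty_or_nonempty Uᶜ with hcU | hcne
  · have : z ∈ U := by
      by_contra hz
      exact absurd (Set.mem_compl hz) (by rw [hcU]; exact id)
    exact this x hzx
  · rcases cut homin U (hDU.mono (Set.subset_univ A)) hup hne hcne with
      ⟨m, hmU, hmin⟩ | ⟨m, hmU, habove⟩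
    · have hsing : A.Definable L {v : Fin 1 → M | v 0 ∈ ({m} : Set M)} := by
        have h2 := def_forall_rel (r := fun c t => t < c) hgtA hDUc
        have := hDU.inter h2
        convert this using 1
        ext v
        simp only [Set.mem_setOf_eq, Set.mem_singleton_iff, Set.mem_inter_iff,
          Set.mem_compl_iff]
        constructor
        · rintro rfl
          exact ⟨hmU, fun t ht => hmin t ht⟩
        · rintro ⟨h1, h2'⟩
          rcases lt_trichotomy (v 0) m with h | h | h
          · exact absurd h1 (hmin _ h)
          · exact h
          · exact absurd hmU (h2' m h)
      have hmx : m < x := hx m (mem_dcl_of_def hsing)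
      exact hmU x hmx
    · have hsing : A.Definable L {v : Fin 1 → M | v 0 ∈ ({m} : Set M)} := by
        have h2 := def_forall_rel (r := fun c t => c < t) hltA hDU
        have := hDUc.inter h2
        convert this using 1
        ext v
        simp only [Set.mem_setOf_eq, Set.mem_singleton_iff, Set.mem_inter_iff,
          Set.mem_compl_iff]
        constructor
        · rintro rfl
          exact ⟨hmU, fun t ht => habove t ht⟩
        · rintro ⟨h1, h2'⟩
          rcases lt_trichotomy (v 0) m with h | h | h
          · exact absurd hmU (by simpa using h2' m h)
          · exact h
          · exact absurd (habove _ h) h1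
      have hmx : m < x := hx m (mem_dcl_of_def hsing)
      obtain ⟨t, hmt, htx⟩ := exists_between hmx
      exact habove t hmt x htx

lemma mem_iff_of_above {L : Language} [L.Structure M] [DenselyOrdered M] [Nonempty M]
    (noMax : ∀ c : M, ∃ d, c < d) (homin : IsOMinimalStructure L M)
    {A : Set M} (hltA : A.Definable L {g : Fin 2 → M | g 0 < g 1})
    (hgtA : A.Definable L {g : Fin 2 → M | g 1 < g 0})
    {x y z : M} (hx : ∀ w ∈ dclSet L A, w < x) (hy : ∀ w ∈ dclSet L A, w < y)
    (hzx : z < x) (hzy : z < y)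
    {s : Set M} (hs : A.Definable L {v : Fin 1 → M | v 0 ∈ s}) :
    x ∈ s ↔ y ∈ s := by
  have hsc : A.Definable L {v : Fin 1 → M | v 0 ∈ sᶜ} := by
    have := hs.compl
    convert this using 1
    rfl
  have hs1 : (Set.univ : Set M).Definable₁ L s := hs.mono (Set.subset_univ A)
  rcases eventual noMax homin s hs1 with hev | hev
  · exact iff_of_true (mem_of_eventually noMax homin hltA hgtA hx hzx hs hev)
      (mem_of_eventually noMax homin hltA hgtA hy hzy hs hev)
  · have hev' : ∃ c, ∀ t, c < t → t ∈ sᶜ := hev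
    exact iff_of_false (mem_of_eventually noMax homin hltA hgtA hx hzx hsc hev')
      (mem_of_eventually noMax homin hltA hgtA hy hzy hsc hev')

section BF

variable {L : Language} {M : Type*} [L.Structure M]

lemma sameTypeL_symm {n : ℕ} {v w : Fin n → M} (h : SameTypeL L v w) : SameTypeL L w v :=
  fun φ => (h φ).symm

variable (hhom : OmegaHom L M) (e : ℕ → M) {N : ℕ} (v₀ w₀ : Fin N → M)
  (h₀ : SameTypeL L v₀ w₀)

/-- the back-and-forth chain of pairs of tuples with the same type -/
noncomputable def bfChain :
    (k : ℕ) → {p : (Fin (N + k) → M) × (Fin (N + k) → M) // SameTypeL L p.1 p.2}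
  | 0 => ⟨(v₀, w₀), h₀⟩
  | (k+1) =>
    let prev := bfChain k
    if k % 2 = 0 then
      let c := e (k / 2)
      ⟨(Fin.snoc prev.1.1 c,
        Fin.snoc prev.1.2 (Classical.choose (hhom _ prev.1.1 prev.1.2 prev.2 c))),
        Classical.choose_spec (hhom _ prev.1.1 prev.1.2 prev.2 c)⟩
    else
      let c := e (k / 2)
      ⟨(Fin.snoc prev.1.1
          (Classical.choose (hhom _ prev.1.2 prev.1.1 (sameTypeL_symm prev.2) c)),
        Fin.snoc prev.1.2 c),
        sameTypeL_symm
          (Classical.choose_spec (hhom _ prev.1.2 prev.1.1 (sameTypeL_symm prev.2) c))⟩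

/-- the v-sequence enumerating the union of the domains -/
noncomputable def vS (i : ℕ) : M :=
  (bfChain hhom e v₀ w₀ h₀ (i+1)).1.1 ⟨i, by omega⟩

/-- the w-sequence enumerating the union of the ranges -/
noncomputable def wS (i : ℕ) : M :=
  (bfChain hhom e v₀ w₀ h₀ (i+1)).1.2 ⟨i, by omega⟩

lemma bfChain_succ_exists (k : ℕ) : ∃ c d : M,
    (bfChain hhom e v₀ w₀ h₀ (k+1)).1.1 = Fin.snoc (bfChain hhom e v₀ w₀ h₀ k).1.1 c ∧
    (bfChain hhom e v₀ w₀ h₀ (k+1)).1.2 = Fin.snoc (bfChain hhom e v₀ w₀ h₀ k).1.2 d := by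
  simp only [bfChain]
  split
  · exact ⟨_, _, rfl, rfl⟩
  · exact ⟨_, _, rfl, rfl⟩

lemma bfChain_succ_apply (k : ℕ) (i : ℕ) (hi : i < N + k) (hi' : i < N + (k+1)) :
    ((bfChain hhom e v₀ w₀ h₀ (k+1)).1.1 ⟨i, hi'⟩ =
      (bfChain hhom e v₀ w₀ h₀ k).1.1 ⟨i, hi⟩) ∧
    ((bfChain hhom e v₀ w₀ h₀ (k+1)).1.2 ⟨i, hi'⟩ =
      (bfChain hhom e v₀ w₀ h₀ k).1.2 ⟨i, hi⟩) := by
  have hcast : (⟨i, hi'⟩ : Fin (N + (k+1))) = Fin.castSucc ⟨i, hi⟩ := rfl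
  obtain ⟨c, d, h1, h2⟩ := bfChain_succ_exists hhom e v₀ w₀ h₀ k
  rw [hcast, h1, h2]
  exact ⟨Fin.snoc_castSucc _ _ _, Fin.snoc_castSucc _ _ _⟩

lemma bfChain_succ_even (k : ℕ) (hk : k % 2 = 0) :
    (bfChain hhom e v₀ w₀ h₀ (k+1)).1.1 =
      Fin.snoc (bfChain hhom e v₀ w₀ h₀ k).1.1 (e (k/2)) := by
  simp only [bfChain]
  rw [if_pos hk]

lemma bfChain_succ_odd (k : ℕ) (hk : ¬ k % 2 = 0) :
    (bfChain hhom e v₀ w₀ h₀ (k+1)).1.2 =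
      Fin.snoc (bfChain hhom e v₀ w₀ h₀ k).1.2 (e (k/2)) := by
  simp only [bfChain]
  rw [if_neg hk]

lemma bfChain_ge (k : ℕ) (i : ℕ) (hi : i < N + k) :
    ∀ k', (h : k ≤ k') →
    ((bfChain hhom e v₀ w₀ h₀ k').1.1 ⟨i, by omega⟩ = (bfChain hhom e v₀ w₀ h₀ k).1.1 ⟨i, hi⟩) ∧
    ((bfChain hhom e v₀ w₀ h₀ k').1.2 ⟨i, by omega⟩ = (bfChain hhom e v₀ w₀ h₀ k).1.2 ⟨i, hi⟩) := by
  intro k' hk'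
  induction k', hk' using Nat.le_induction with
  | base => exact ⟨rfl, rfl⟩
  | succ k' hk' ih =>
    have hik' : i < N + k' := by omega
    obtain ⟨s1, s2⟩ := bfChain_succ_apply hhom e v₀ w₀ h₀ k' i hik' (by omega)
    have ih' := ih
    exact ⟨s1.trans ih'.1, s2.trans ih'.2⟩

lemma bfChain_apply_eq (k : ℕ) (i : ℕ) (hi : i < N + k) :
    ((bfChain hhom e v₀ w₀ h₀ k).1.1 ⟨i, hi⟩ = vS hhom e v₀ w₀ h₀ i) ∧
    ((bfChain hhom e v₀ w₀ h₀ k).1.2 ⟨i, hi⟩ = wS hhom e v₀ w₀ h₀ i) := by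
  rcases le_total k (i+1) with h | h
  · have := bfChain_ge hhom e v₀ w₀ h₀ k i hi (i+1) h
    exact ⟨this.1.symm, this.2.symm⟩
  · have hii : i < N + (i+1) := by omega
    have := bfChain_ge hhom e v₀ w₀ h₀ (i+1) i hii k h
    exact ⟨this.1, this.2⟩

lemma realize_vS_iff_wS (m : ℕ) (φ : L.Formula (Fin m)) (u : Fin m → ℕ) :
    (φ.Realize (fun t => vS hhom e v₀ w₀ h₀ (u t)) ↔
     φ.Realize (fun t => wS hhom e v₀ w₀ h₀ (u t))) := by
  classical
  have hu : ∀ t, u t < N + ((Finset.univ.sup u) + 1) := fun t => by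
    have : u t ≤ Finset.univ.sup u := Finset.le_sup (Finset.mem_univ t)
    omega
  have h := (bfChain hhom e v₀ w₀ h₀ ((Finset.univ.sup u) + 1)).2
    (φ.relabel (fun t => (⟨u t, hu t⟩ : Fin (N + ((Finset.univ.sup u) + 1)))))
  rw [Formula.realize_relabel, Formula.realize_relabel] at h
  have h1 : ((bfChain hhom e v₀ w₀ h₀ ((Finset.univ.sup u) + 1)).1.1 ∘
      fun t => (⟨u t, hu t⟩ : Fin (N + ((Finset.univ.sup u) + 1)))) =
      fun t => vS hhom e v₀ w₀ h₀ (u t) :=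
    funext fun t => (bfChain_apply_eq hhom e v₀ w₀ h₀ _ (u t) (hu t)).1
  have h2 : ((bfChain hhom e v₀ w₀ h₀ ((Finset.univ.sup u) + 1)).1.2 ∘
      fun t => (⟨u t, hu t⟩ : Fin (N + ((Finset.univ.sup u) + 1)))) =
      fun t => wS hhom e v₀ w₀ h₀ (u t) :=
    funext fun t => (bfChain_apply_eq hhom e v₀ w₀ h₀ _ (u t) (hu t)).2
  rw [h1, h2] at h
  exact h

lemma vS_surj (hse : Function.Surjective e) :
    Function.Surjective (vS hhom e v₀ w₀ h₀) := by
  intro m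
  obtain ⟨j, rfl⟩ := hse m
  refine ⟨N + 2*j, ?_⟩
  have hlt : N + 2*j < N + (2*j+1) := by omega
  rw [← (bfChain_apply_eq hhom e v₀ w₀ h₀ (2*j+1) (N+2*j) hlt).1,
    bfChain_succ_even hhom e v₀ w₀ h₀ (2*j) (by omega)]
  have hej : e (2*j/2) = e j := by congr 1; omega
  exact (Fin.snoc_last _ _).trans hej

lemma wS_surj (hse : Function.Surjective e) :
    Function.Surjective (wS hhom e v₀ w₀ h₀) := by
  intro m
  obtain ⟨j, rfl⟩ := hse m
  refine ⟨N + (2*j+1), ?_⟩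
  have hlt : N + (2*j+1) < N + (2*j+1+1) := by omega
  rw [← (bfChain_apply_eq hhom e v₀ w₀ h₀ (2*j+1+1) (N+(2*j+1)) hlt).2,
    bfChain_succ_odd hhom e v₀ w₀ h₀ (2*j+1) (by omega)]
  have hej : e ((2*j+1)/2) = e j := by congr 1; omega
  exact (Fin.snoc_last _ _).trans hej

lemma vS_zero (i : Fin N) : vS hhom e v₀ w₀ h₀ i.val = v₀ i := by
  have hi : (i : ℕ) < N + 0 := by omega
  have := (bfChain_apply_eq hhom e v₀ w₀ h₀ 0 i.val hi).1
  rw [← this]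
  rfl

lemma wS_zero (i : Fin N) : wS hhom e v₀ w₀ h₀ i.val = w₀ i := by
  have hi : (i : ℕ) < N + 0 := by omega
  have := (bfChain_apply_eq hhom e v₀ w₀ h₀ 0 i.val hi).2
  rw [← this]
  rfl

end BF

section Auto

open Structure

variable {L : Language} {M : Type*} [L.Structure M]

lemma exists_auto [Countable M] [Nonempty M] (hhom : OmegaHom L M) {N : ℕ}
    (v₀ w₀ : Fin N → M) (h₀ : SameTypeL L v₀ w₀) :
    ∃ π : M ≃[L] M, ∀ i : Fin N, π (v₀ i) = w₀ i := by
  obtain ⟨e, hse⟩ := exists_surjective_nat M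
  set v := vS hhom e v₀ w₀ h₀ with hv
  set w := wS hhom e v₀ w₀ h₀ with hw
  have transfer : ∀ (m : ℕ) (φ : L.Formula (Fin m)) (u : Fin m → ℕ),
      (φ.Realize (fun t => v (u t)) ↔ φ.Realize (fun t => w (u t))) :=
    realize_vS_iff_wS hhom e v₀ w₀ h₀
  have veq : ∀ i j : ℕ, v i = v j ↔ w i = w j := by
    intro i j
    have h := transfer 2 (Term.equal (Term.var 0) (Term.var 1)) ![i, j]
    simpa [Formula.realize_equal] using h
  choose vind hvind using vS_surj hhom e v₀ w₀ h₀ hse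
  choose wind hwind using wS_surj hhom e v₀ w₀ h₀ hse
  set f : M → M := fun m => w (vind m) with hf
  set g : M → M := fun m => v (wind m) with hg
  have hfv : ∀ i, f (v i) = w i := fun i => (veq _ _).mp (hvind (v i))
  have hgw : ∀ i, g (w i) = v i := fun i => (veq _ _).mpr (hwind (w i))
  have hgf : ∀ m, g (f m) = m := by
    intro m
    calc g (f m) = g (w (vind m)) := rfl
    _ = v (vind m) := hgw _
    _ = m := hvind m
  have hfg : ∀ m, f (g m) = m := by
    intro m
    calc f (g m) = f (v (wind m)) := rfl
    _ = w (wind m) := hfv _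
    _ = m := hwind m
  refine ⟨⟨⟨f, g, hgf, hfg⟩, ?_, ?_⟩, ?_⟩
  · intro m F x
    have hx : ∀ t, v (vind (x t)) = x t := fun t => hvind (x t)
    have h := transfer (m+1)
      (Term.equal (Term.func F (fun t => Term.var (Fin.castSucc t))) (Term.var (Fin.last m)))
      (Fin.snoc (fun t => vind (x t)) (vind (funMap F x)))
    simp only [Formula.realize_equal, Term.realize_func, Term.realize_var,
      Fin.snoc_castSucc, Fin.snoc_last] at h
    have hleft : funMap F (fun t => v (vind (x t))) = v (vind (funMap F x)) := by
      have h1 : v (vind (funMap F x)) = funMap F x := hvind _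
      rw [h1]
      exact congrArg (funMap F) (funext hx)
    have hright := h.mp hleft
    show f (funMap F x) = funMap F (fun t => f (x t))
    calc f (funMap F x) = w (vind (funMap F x)) := rfl
    _ = funMap F (fun t => w (vind (x t))) := hright.symm
    _ = funMap F (fun t => f (x t)) := rfl
  · intro m r x
    have hx : ∀ t, v (vind (x t)) = x t := fun t => hvind (x t)
    have h := transfer m (Relations.formula r (fun t => Term.var t)) (fun t => vind (x t))
    simp only [Formula.realize_rel, Term.realize_var] at h
    show RelMap r (fun t => f (x t)) ↔ RelMap r x
    have hvx : RelMap r (fun t => v (vind (x t))) ↔ RelMap r x :=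
      iff_of_eq (congrArg (RelMap r) (funext hx))
    calc RelMap r (fun t => f (x t)) ↔ RelMap r (fun t => w (vind (x t))) := Iff.rfl
    _ ↔ RelMap r (fun t => v (vind (x t))) := h.symm
    _ ↔ RelMap r x := hvx
  · intro i
    show f (v₀ i) = w₀ i
    rw [← vS_zero hhom e v₀ w₀ h₀ i, ← hv]
    rw [hfv i.val, hw]
    exact wS_zero hhom e v₀ w₀ h₀ i

end Auto

end OMAux


theorem stmt_14 {L : Language} {M : Type*} [L.Structure M] [LinearOrder M] [DenselyOrdered M]
    (hle : (Set.univ : Set M).Definable L {v : Fin 2 → M | v 0 ≤ v 1})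
    (homin : IsOMinimalStructure L M)
    (hcount : Countable M) (hhom : OmegaHom L M)
    (hdcl : ∀ (n : ℕ) (a : Fin n → M), ∃ z : M, ∀ w ∈ dclSet L (Set.range a), w < z)
    (X : Set M)
    (hunb : ∀ x : M, ∃ y ∈ X, x < y)
    (hcounb : ∀ x : M, ∃ y ∈ Xᶜ, x < y) :
    ∀ (n : ℕ) (a : Fin n → M),
      ∃ π : M ≃[L] M, (∀ i, π (a i) = a i) ∧ π '' X ≠ X := by
  classical
  intro n a
  obtain ⟨z0, -⟩ := hdcl 0 (fun i => i.elim0)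
  haveI : Nonempty M := ⟨z0⟩
  haveI : Countable M := hcount
  have noMax : ∀ c : M, ∃ d, c < d := fun c => by
    obtain ⟨y, -, hy⟩ := hunb c; exact ⟨y, hy⟩
  obtain ⟨A0, -, hA0⟩ := Set.definable_iff_finitely_definable.mp hle
  obtain ⟨k, p, hp⟩ : ∃ (k : ℕ) (p : Fin k → M), (A0 : Set M) ⊆ Set.range p := by
    refine ⟨A0.toList.length, fun i => A0.toList.get i, ?_⟩
    intro t ht
    have ht' : t ∈ A0.toList := by simpa using ht
    obtain ⟨i, hi⟩ := List.get_of_mem ht'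
    exact ⟨i, hi⟩
  set b : Fin (n + k) → M := Sum.elim a p ∘ finSumFinEquiv.symm with hb
  have hrange : Set.range b = Set.range a ∪ Set.range p := by
    rw [hb, Set.range_comp]
    rw [Equiv.range_eq_univ, Set.image_univ, Set.Sum.elim_range]
  have hA : Set.range a ⊆ Set.range b := by
    rw [hrange]; exact Set.subset_union_left
  have hA0b : (A0 : Set M) ⊆ Set.range b := by
    rw [hrange]; exact hp.trans Set.subset_union_right
  have hleb : (Set.range b).Definable L {v : Fin 2 → M | v 0 ≤ v 1} := hA0.mono hA0b
  have hltA : (Set.range b).Definable L {g : Fin 2 → M | g 0 < g 1} := by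
    have h1 := (hleb.preimage_comp (![1, 0] : Fin 2 → Fin 2)).compl
    convert h1 using 1
    ext g
    simp [not_le]
  have hgtA : (Set.range b).Definable L {g : Fin 2 → M | g 1 < g 0} := by
    have h1 := hleb.compl
    convert h1 using 1
    ext g
    simp [not_le]
  obtain ⟨z, hz⟩ := hdcl (n + k) b
  obtain ⟨x, hxX, hzx⟩ := hunb z
  obtain ⟨y, hyX, hzy⟩ := hcounb z
  have hx : ∀ w ∈ dclSet L (Set.range b), w < x := fun w hw => lt_trans (hz w hw) hzx
  have hy : ∀ w ∈ dclSet L (Set.range b), w < y := fun w hw => lt_trans (hz w hw) hzy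
  have hst : SameTypeL L (Fin.snoc a x) (Fin.snoc a y) := by
    intro φ
    have hs : (Set.range b).Definable L
        {v : Fin 1 → M | v 0 ∈ {t : M | φ.Realize (Fin.snoc a t)}} :=
      (OMAux.def_realize_snoc a φ).mono hA
    exact OMAux.mem_iff_of_above noMax homin hltA hgtA hx hy hzx hzy hs
  obtain ⟨π, hπ⟩ := OMAux.exists_auto hhom (Fin.snoc a x) (Fin.snoc a y) hst
  refine ⟨π, ?_, ?_⟩
  · intro i
    have h := hπ (Fin.castSucc i)
    simpa [Fin.snoc_castSucc] using h
  · have hπx : π x = y := by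
      have h := hπ (Fin.last n)
      simpa [Fin.snoc_last] using h
    intro hXX
    exact hyX (hXX ▸ ⟨x, hxX, hπx⟩)
end

section
/- Let K be a real closed field enumerated by a well-ordering, K = (x_ι | ι < κ) with x_0 = 1. Define by transfinite recursion an increasing sequence of divisible subgroups G_ι of the multiplicative group of positive elements: G_0 = {1}; at limits take unions; at successor step ι+1, set G_{ι+1} = G_ι if some element of G_ι is archimedean equivalent to x_ι (assuming x_ι > 0; otherwise to |x_ι|), and otherwise let G_{ι+1} be the subgroup generated by G_ι together with all rational powers of x_ι. Then G = ⋃_{ι<κ} G_ι is a divisible abelian subgroup of (K^{>0}, ·) intersecting each archimedean equivalence class of K^{>0} in exactly one element, i.e. G is a value group section of K. Moreover this construction uses no choice (only transfinite recursion along the given well-ordering). -/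
open FirstOrder Language FirstOrder.Ring

/-- A linearly ordered field is real closed. -/
def IsRealClosed' (K : Type*) [Field K] [LinearOrder K] [IsStrictOrderedRing K] : Prop :=
  (∀ x : K, 0 ≤ x → ∃ y : K, y ^ 2 = x) ∧
    ∀ p : Polynomial K, Odd p.natDegree → ∃ x : K, p.eval x = 0

open scoped Classical in
/-- The transfinite recursion of Lemma 7.1: given an enumeration `x` of `K`, `Gseq K x ι` is
the subgroup `G_ι` of the multiplicative group of positive elements of `K`: `G_0 = {1}`,
unions at limits, and at successor stage `ι + 1` either nothing is added (when `|x ι|` is zero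
or already archimedean equivalent to an element of `G_ι`), or all rational powers of `|x ι|`
(i.e. all positive `z` with `z ^ n = |x ι| ^ m` for some `m : ℤ` and `0 < n : ℕ`) are added. -/
noncomputable def Gseq (K : Type*) [Field K] [LinearOrder K] [IsStrictOrderedRing K] (x : Ordinal → K) :
    Ordinal → Subgroup {y : K // 0 < y} := fun o =>
  Ordinal.limitRecOn o
    ⊥
    (fun α Gα =>
      if (x α = 0) ∨ ∃ g ∈ Gα, ArchEquiv K |x α| (g : K) then Gα
      else Gα ⊔ Subgroup.closure
        {z : {y : K // 0 < y} | ∃ (m : ℤ) (nn : ℕ), 0 < nn ∧ (z : K) ^ nn = |x α| ^ m})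
    (fun o _ ih => ⨆ o' : Set.Iio o, ih o' o'.2)

section Aux

variable {K : Type*} [Field K] [LinearOrder K] [IsStrictOrderedRing K]

private lemma arch_refl {y : K} (hy : 0 < y) : ArchEquiv K y y :=
  ⟨2, by push_cast; nlinarith, by push_cast; nlinarith⟩

private lemma arch_symm {u v : K} (h : ArchEquiv K u v) : ArchEquiv K v u :=
  ⟨h.choose, h.choose_spec.2, h.choose_spec.1⟩

private lemma arch_trans {u v w : K} (h1 : ArchEquiv K u v) (h2 : ArchEquiv K v w) :
    ArchEquiv K u w := by
  obtain ⟨n, hn1, hn2⟩ := h1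
  obtain ⟨m, hm1, hm2⟩ := h2
  have h0n : (0:K) ≤ n := Nat.cast_nonneg n
  have h0m : (0:K) ≤ m := Nat.cast_nonneg m
  refine ⟨n * m, ?_, ?_⟩ <;> push_cast <;> nlinarith

private lemma arch_mul_right {u v w : K} (hw : 0 < w) (h : ArchEquiv K u v) :
    ArchEquiv K (u * w) (v * w) := by
  obtain ⟨n, h1, h2⟩ := h
  exact ⟨n, by nlinarith, by nlinarith⟩

private lemma arch_inv {u v : K} (hu : 0 < u) (hv : 0 < v) (h : ArchEquiv K u v) :
    ArchEquiv K u⁻¹ v⁻¹ := by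
  obtain ⟨n, h1, h2⟩ := h
  have hui : (0:K) < u⁻¹ := inv_pos.2 hu
  have hvi : (0:K) < v⁻¹ := inv_pos.2 hv
  have hcu := mul_inv_cancel₀ hu.ne'
  have hcv := mul_inv_cancel₀ hv.ne'
  refine ⟨n, ?_, ?_⟩
  · nlinarith [mul_lt_mul_of_pos_left h2 (mul_pos hui hvi)]
  · nlinarith [mul_lt_mul_of_pos_left h1 (mul_pos hui hvi)]

private lemma arch_one_mul {u v : K} (hu : 0 < u) (hv : 0 < v)
    (h1 : ArchEquiv K u 1) (h2 : ArchEquiv K v 1) : ArchEquiv K (u * v) 1 := by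
  obtain ⟨n, hn1, hn2⟩ := h1
  obtain ⟨m, hm1, hm2⟩ := h2
  rw [mul_one] at hn1 hm1
  refine ⟨n * m, ?_, ?_⟩ <;> push_cast <;> nlinarith

private lemma arch_pow_one {u : K} (hu : 0 < u) (h : ArchEquiv K u 1) (k : ℕ) :
    ArchEquiv K (u ^ k) 1 := by
  induction k with
  | zero => simpa using arch_refl (one_pos : (0:K) < 1)
  | succ k ih =>
      rw [pow_succ]
      exact arch_one_mul (pow_pos hu k) hu ih h

private lemma arch_pow_cancel {u v : K} (hu : 0 < u) (hv : 0 < v) {k : ℕ} (hk : 0 < k)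
    (h : ArchEquiv K (u ^ k) (v ^ k)) : ArchEquiv K u v := by
  obtain ⟨n, h1, h2⟩ := h
  have hn : 1 ≤ n := by
    by_contra hn
    push_neg at hn
    interval_cases n
    simp at h1
    nlinarith [pow_pos hu k, pow_pos hv k]
  refine ⟨n, ?_, ?_⟩
  · by_contra hc
    push_neg at hc
    have : ((n:K) * v) ^ k ≤ u ^ k := pow_le_pow_left₀ (by positivity) hc k
    have h3 : (n:K) ^ k * v ^ k ≤ u ^ k := by rwa [mul_pow] at this
    have h4 : (n:K) ≤ (n:K) ^ k := by
      calc (n:K) = (n:K) ^ 1 := (pow_one _).symm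
        _ ≤ (n:K) ^ k := pow_le_pow_right₀ (by exact_mod_cast hn) hk
    nlinarith [pow_pos hv k]
  · by_contra hc
    push_neg at hc
    have : ((n:K) * u) ^ k ≤ v ^ k := pow_le_pow_left₀ (by positivity) hc k
    have h3 : (n:K) ^ k * u ^ k ≤ v ^ k := by rwa [mul_pow] at this
    have h4 : (n:K) ≤ (n:K) ^ k := by
      calc (n:K) = (n:K) ^ 1 := (pow_one _).symm
        _ ≤ (n:K) ^ k := pow_le_pow_right₀ (by exact_mod_cast hn) hk
    nlinarith [pow_pos hu k]

private lemma exists_pos_root (hK : IsRealClosed' K) :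
    ∀ n : ℕ, 0 < n → ∀ z : K, 0 < z → ∃ w : K, 0 < w ∧ w ^ n = z := by
  intro n
  induction n using Nat.strong_induction_on with
  | _ n ih =>
    intro hn z hz
    rcases Nat.even_or_odd n with he | ho
    · obtain ⟨k, rfl⟩ := he
      have hk : 0 < k := by omega
      obtain ⟨w, hw, hwk⟩ := ih k (by omega) hk z hz
      obtain ⟨y, hy⟩ := hK.1 w hw.le
      refine ⟨|y|, ?_, ?_⟩
      · have hy0 : y ≠ 0 := by rintro rfl; simp at hy; subst hy; exact lt_irrefl _ hw
        exact abs_pos.2 hy0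
      · have hsq : |y| ^ 2 = w := by rw [sq_abs, hy]
        calc |y| ^ (k + k) = (|y| ^ 2) ^ k := by ring
          _ = w ^ k := by rw [hsq]
          _ = z := hwk
    · obtain ⟨y, hy⟩ := hK.2 (Polynomial.X ^ n - Polynomial.C z) (by
        rwa [Polynomial.natDegree_X_pow_sub_C])
      simp only [Polynomial.eval_sub, Polynomial.eval_pow, Polynomial.eval_X,
        Polynomial.eval_C, sub_eq_zero] at hy
      have hy0 : 0 < y := by
        by_contra hc
        push_neg at hc
        have := Odd.pow_nonpos ho hc
        rw [hy] at this
        exact absurd this (not_le.2 hz)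
      exact ⟨y, hy0, hy⟩

private lemma pos_pow_inj {a b : K} (ha : 0 < a) (hb : 0 < b) {n : ℕ} (hn : 0 < n)
    (h : a ^ n = b ^ n) : a = b := by
  rcases lt_trichotomy a b with hlt | he | hgt
  · exact absurd h (ne_of_lt (pow_lt_pow_left₀ hlt ha.le hn.ne'))
  · exact he
  · exact absurd h.symm (ne_of_lt (pow_lt_pow_left₀ hgt hb.le hn.ne'))

/-- The subgroup of rational powers of a positive element `b`. -/
private def ratPowers (b : K) : Subgroup {y : K // 0 < y} where
  carrier := {z : {y : K // 0 < y} | ∃ (m : ℤ) (nn : ℕ), 0 < nn ∧ (z : K) ^ nn = b ^ m}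
  one_mem' := ⟨0, 1, one_pos, by simp⟩
  mul_mem' := by
    rintro z1 z2 ⟨m1, n1, hn1, e1⟩ ⟨m2, n2, hn2, e2⟩
    by_cases hb : b = 0
    · subst hb
      have hm1 : m1 = 0 := by
        by_contra hm
        rw [zero_zpow m1 hm] at e1
        exact absurd e1 (ne_of_gt (pow_pos z1.2 n1))
      have hm2 : m2 = 0 := by
        by_contra hm
        rw [zero_zpow m2 hm] at e2
        exact absurd e2 (ne_of_gt (pow_pos z2.2 n2))
      subst hm1; subst hm2
      rw [zpow_zero] at e1 e2
      refine ⟨0, n1 * n2, Nat.mul_pos hn1 hn2, ?_⟩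
      have hz : ((z1 * z2 : {y : K // 0 < y}) : K) = (z1 : K) * (z2 : K) := rfl
      rw [hz, zpow_zero, mul_pow, pow_mul, e1, one_pow, one_mul, mul_comm n1 n2,
        pow_mul, e2, one_pow]
    · refine ⟨m1 * n2 + m2 * n1, n1 * n2, Nat.mul_pos hn1 hn2, ?_⟩
      have hz : ((z1 * z2 : {y : K // 0 < y}) : K) = (z1 : K) * (z2 : K) := rfl
      rw [hz, mul_pow, zpow_add₀ hb, pow_mul, e1, mul_comm n1 n2, pow_mul, e2,
        ← zpow_natCast (b ^ m1), ← zpow_natCast (b ^ m2), ← zpow_mul, ← zpow_mul]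
  inv_mem' := by
    rintro z ⟨m, nn, hnn, e⟩
    refine ⟨-m, nn, hnn, ?_⟩
    have : ((z⁻¹ : {y : K // 0 < y}) : K) = (z : K)⁻¹ := rfl
    rw [this, inv_pow, e, zpow_neg]

private lemma ratPowers_carrier (b : K) :
    {z : {y : K // 0 < y} | ∃ (m : ℤ) (nn : ℕ), 0 < nn ∧ (z : K) ^ nn = b ^ m} =
      (ratPowers b : Set {y : K // 0 < y}) := rfl

private lemma Gseq_zero (x : Ordinal → K) : Gseq K x 0 = ⊥ := by
  unfold Gseq
  rw [Ordinal.limitRecOn_zero]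

open scoped Classical in
private lemma Gseq_succ_eq (x : Ordinal → K) (α : Ordinal) :
    Gseq K x (Order.succ α) =
      if (x α = 0) ∨ ∃ g ∈ Gseq K x α, ArchEquiv K |x α| (g : K) then Gseq K x α
      else Gseq K x α ⊔ Subgroup.closure
        {z : {y : K // 0 < y} | ∃ (m : ℤ) (nn : ℕ), 0 < nn ∧ (z : K) ^ nn = |x α| ^ m} := by
  conv_lhs => unfold Gseq
  rw [Ordinal.limitRecOn_succ]
  rfl

open scoped Classical in
private lemma Gseq_succ_pos (x : Ordinal → K) (α : Ordinal)
    (h : (x α = 0) ∨ ∃ g ∈ Gseq K x α, ArchEquiv K |x α| (g : K)) :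
    Gseq K x (Order.succ α) = Gseq K x α := by
  rw [Gseq_succ_eq, if_pos h]

open scoped Classical in
private lemma Gseq_succ_neg (x : Ordinal → K) (α : Ordinal)
    (h : ¬((x α = 0) ∨ ∃ g ∈ Gseq K x α, ArchEquiv K |x α| (g : K))) :
    Gseq K x (Order.succ α) = Gseq K x α ⊔ ratPowers |x α| := by
  rw [Gseq_succ_eq, if_neg h, ratPowers_carrier, Subgroup.closure_eq]

private lemma Gseq_limit (x : Ordinal → K) {o : Ordinal} (ho : Order.IsSuccLimit o) :
    Gseq K x o = ⨆ o' : Set.Iio o, Gseq K x o' := by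
  unfold Gseq
  rw [Ordinal.limitRecOn_limit _ _ _ _ ho]

private lemma Gseq_le_succ (x : Ordinal → K) (α : Ordinal) :
    Gseq K x α ≤ Gseq K x (Order.succ α) := by
  by_cases h : (x α = 0) ∨ ∃ g ∈ Gseq K x α, ArchEquiv K |x α| (g : K)
  · rw [Gseq_succ_pos x α h]
  · rw [Gseq_succ_neg x α h]
    exact le_sup_left

private lemma Gseq_mono (x : Ordinal → K) : Monotone (Gseq K x) := by
  intro a b hab
  induction b using Ordinal.limitRecOn with
  | zero => rw [nonpos_iff_eq_zero] at hab; subst hab; exact le_rfl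
  | add_one β ih =>
      rw [Ordinal.add_one_eq_succ] at hab ⊢
      rcases Order.le_succ_iff_eq_or_le.1 hab with rfl | h
      · exact le_rfl
      · exact (ih h).trans (Gseq_le_succ x β)
  | limit o ho ih =>
      rcases eq_or_lt_of_le hab with rfl | h
      · exact le_rfl
      · rw [Gseq_limit x ho]
        exact le_iSup (fun o' : Set.Iio o => Gseq K x o') ⟨a, h⟩

/-- The invariant carried through the recursion. -/
private def GoodSG (G : Subgroup {y : K // 0 < y}) : Prop :=
  (∀ g ∈ G, ∀ n : ℕ, 0 < n → ∃ h ∈ G, h ^ n = g) ∧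
    ∀ g ∈ G, ArchEquiv K (g : K) 1 → g = 1

private lemma goodSG_gseq (hK : IsRealClosed' K) (x : Ordinal → K) (o : Ordinal) :
    GoodSG (Gseq K x o) := by
  induction o using Ordinal.limitRecOn with
  | zero =>
      constructor
      · intro g hg n hn
        rw [Gseq_zero, Subgroup.mem_bot] at hg
        exact ⟨1, Subgroup.one_mem _, by rw [one_pow, hg]⟩
      · intro g hg _
        rw [Gseq_zero, Subgroup.mem_bot] at hg
        exact hg
  | add_one α ih =>
      rw [Ordinal.add_one_eq_succ]
      by_cases hcond : (x α = 0) ∨ ∃ g ∈ Gseq K x α, ArchEquiv K |x α| (g : K)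
      · rw [Gseq_succ_pos x α hcond]; exact ih
      · rw [Gseq_succ_neg x α hcond]
        push_neg at hcond
        obtain ⟨hx0, hnone⟩ := hcond
        have hb : (0:K) < |x α| := abs_pos.2 hx0
        set b := |x α| with hbdef
        constructor
        · -- divisibility
          intro g hg n hn
          rw [Subgroup.mem_sup] at hg
          obtain ⟨a, ha, s, hs, rfl⟩ := hg
          obtain ⟨a', ha', ha'n⟩ := ih.1 a ha n hn
          obtain ⟨m, nn, hnn, hsnn⟩ := hs
          obtain ⟨w, hw, hwn⟩ := exists_pos_root hK n hn (s : K) s.2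
          have hs' : (⟨w, hw⟩ : {y : K // 0 < y}) ∈ ratPowers b := by
            refine ⟨m, n * nn, Nat.mul_pos hn hnn, ?_⟩
            show w ^ (n * nn) = b ^ m
            rw [pow_mul, hwn, hsnn]
          refine ⟨a' * ⟨w, hw⟩, Subgroup.mul_mem_sup ha' hs', ?_⟩
          rw [mul_pow, ha'n]
          congr 1
          exact Subtype.ext (by simpa using hwn)
        · -- archimedean triviality
          intro g hg harch
          rw [Subgroup.mem_sup] at hg
          obtain ⟨a, ha, s, hs, rfl⟩ := hg
          obtain ⟨m, nn, hnn, hsnn⟩ := hs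
          rcases eq_or_ne m 0 with rfl | hm
          · have hs1 : (s : K) = 1 := by
              refine pos_pow_inj s.2 one_pos hnn ?_
              rw [hsnn, zpow_zero, one_pow]
            have hseq : s = 1 := Subtype.ext hs1
            subst hseq
            rw [mul_one] at harch ⊢
            exact ih.2 a ha harch
          · exfalso
            -- (a*s)^nn = a^nn * b^m is archimedean equivalent to 1
            have h1 : ArchEquiv K (((a : K) * (s : K)) ^ nn) 1 :=
              arch_pow_one (mul_pos a.2 s.2) harch nn
            have h2 : ((a : K) * (s : K)) ^ nn = (a : K) ^ nn * b ^ m := by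
              rw [mul_pow, hsnn]
            rw [h2] at h1
            have hainv : (0:K) < ((a : K) ^ nn)⁻¹ := inv_pos.2 (pow_pos a.2 nn)
            have h3 : ArchEquiv K ((a : K) ^ nn * b ^ m * ((a : K) ^ nn)⁻¹)
                (1 * ((a : K) ^ nn)⁻¹) := arch_mul_right hainv h1
            have h4 : ArchEquiv K (b ^ m) (((a⁻¹ ^ nn : {y : K // 0 < y}) : K)) := by
              have e1 : (a : K) ^ nn * b ^ m * ((a : K) ^ nn)⁻¹ = b ^ m := by
                rw [mul_comm ((a : K) ^ nn) (b ^ m)]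
                exact mul_inv_cancel_right₀ (pow_pos a.2 nn).ne' _
              have e2 : (1 : K) * ((a : K) ^ nn)⁻¹ =
                  ((a⁻¹ ^ nn : {y : K // 0 < y}) : K) := by
                show (1:K) * ((a : K) ^ nn)⁻¹ = ((a : K)⁻¹) ^ nn
                rw [one_mul, inv_pow]
              rwa [e1, e2] at h3
            set c : {y : K // 0 < y} := a⁻¹ ^ nn with hc
            have hcmem : c ∈ Gseq K x α := Subgroup.pow_mem _ (Subgroup.inv_mem _ ha) nn
            set M : ℕ := m.natAbs with hM
            have hMpos : 0 < M := Int.natAbs_pos.2 hm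
            -- find c' ∈ Gα with ArchEquiv (b ^ M) c'
            have key : ∃ c' ∈ Gseq K x α, ArchEquiv K (b ^ M) ((c' : K)) := by
              rcases lt_or_gt_of_ne hm with hneg | hpos
              · have hmeq : m = -(M : ℤ) := by omega
                have hbm : b ^ m = (b ^ M)⁻¹ := by
                  rw [hmeq, zpow_neg, zpow_natCast]
                rw [hbm] at h4
                have := arch_inv (inv_pos.2 (pow_pos hb M)) c.2 h4
                rw [inv_inv] at this
                refine ⟨c⁻¹, Subgroup.inv_mem _ hcmem, ?_⟩
                exact this
              · have hmeq : m = (M : ℤ) := by omega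
                have hbm : b ^ m = b ^ M := by rw [hmeq, zpow_natCast]
                rw [hbm] at h4
                exact ⟨c, hcmem, h4⟩
            obtain ⟨c', hc', harch'⟩ := key
            obtain ⟨h, hh, hhM⟩ := ih.1 c' hc' M hMpos
            have : ArchEquiv K (b ^ M) ((h : K) ^ M) := by
              rw [show ((h : K) ^ M) = ((h ^ M : {y : K // 0 < y}) : K) from rfl, hhM]
              exact harch'
            exact hnone h hh (arch_pow_cancel hb h.2 hMpos this)
  | limit o ho ih =>
      rw [Gseq_limit x ho]
      have hne : Nonempty (Set.Iio o) := ⟨⟨0, ho.bot_lt⟩⟩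
      have hdir : Directed (· ≤ ·) (fun o' : Set.Iio o => Gseq K x o') := by
        intro i j
        rcases le_total i.1 j.1 with h | h
        · exact ⟨j, Gseq_mono x h, le_rfl⟩
        · exact ⟨i, le_rfl, Gseq_mono x h⟩
      constructor
      · intro g hg n hn
        rw [Subgroup.mem_iSup_of_directed hdir] at hg
        obtain ⟨i, hi⟩ := hg
        obtain ⟨h, hh, hhn⟩ := (ih i.1 i.2).1 g hi n hn
        exact ⟨h, Subgroup.mem_iSup_of_directed hdir |>.2 ⟨i, hh⟩, hhn⟩
      · intro g hg harch
        rw [Subgroup.mem_iSup_of_directed hdir] at hg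
        obtain ⟨i, hi⟩ := hg
        exact (ih i.1 i.2).2 g hi harch

end Aux
theorem stmt_16 {K : Type*} [Field K] [LinearOrder K] [IsStrictOrderedRing K] (hK : IsRealClosed' K)
    (κ : Ordinal) (x : Ordinal → K) (hx0 : x 0 = 1)
    (hsurj : ∀ y : K, ∃ ι < κ, x ι = y) :
    ∀ G : Subgroup {y : K // 0 < y}, G = ⨆ ι ∈ Set.Iio κ, Gseq K x ι →
      -- `G` is a divisible (abelian) subgroup of the positive multiplicative group of `K` ...
      (∀ g ∈ G, ∀ n : ℕ, 0 < n → ∃ h ∈ G, h ^ n = g) ∧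
      -- ... meeting each archimedean equivalence class in exactly one element,
      -- i.e. `G` is a value group section of `K`.
      (∀ y : K, 0 < y → ∃! g : {z : K // 0 < z}, g ∈ G ∧ ArchEquiv K y (g : K)) := by
  intro G hG
  obtain ⟨ι1, hι1, _⟩ := hsurj 1
  have hκ : (0 : Ordinal) < κ := lt_of_le_of_lt (zero_le (a := ι1)) hι1
  have hne : Nonempty (Set.Iio κ) := ⟨⟨0, hκ⟩⟩
  have hdir : Directed (· ≤ ·) (fun ι : Set.Iio κ => Gseq K x ι) := by
    intro i j
    rcases le_total i.1 j.1 with h | h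
    · exact ⟨j, Gseq_mono x h, le_rfl⟩
    · exact ⟨i, le_rfl, Gseq_mono x h⟩
  have hGmem : ∀ g, g ∈ G ↔ ∃ ι : Set.Iio κ, g ∈ Gseq K x ι := by
    intro g
    rw [hG, ← iSup_subtype'']
    exact Subgroup.mem_iSup_of_directed hdir
  have hGood1 : ∀ g ∈ G, ∀ n : ℕ, 0 < n → ∃ h ∈ G, h ^ n = g := by
    intro g hg n hn
    obtain ⟨i, hi⟩ := (hGmem g).1 hg
    obtain ⟨h, hh, hhn⟩ := (goodSG_gseq hK x i.1).1 g hi n hn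
    exact ⟨h, (hGmem h).2 ⟨i, hh⟩, hhn⟩
  have hGood2 : ∀ g ∈ G, ArchEquiv K (g : K) 1 → g = 1 := by
    intro g hg harch
    obtain ⟨i, hi⟩ := (hGmem g).1 hg
    exact (goodSG_gseq hK x i.1).2 g hi harch
  refine ⟨hGood1, ?_⟩
  intro y hy
  -- existence of some archimedean representative in `G`
  have hex : ∀ α : Ordinal, 0 < x α →
      ∃ g ∈ Gseq K x (Order.succ α), ArchEquiv K (x α) (g : K) := by
    intro α hα
    have habs : |x α| = x α := abs_of_pos hα
    by_cases hcond : (x α = 0) ∨ ∃ g ∈ Gseq K x α, ArchEquiv K |x α| (g : K)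
    · have hcond' := hcond
      rcases hcond with h0 | ⟨g, hg, hgarch⟩
      · exact absurd h0 hα.ne'
      · refine ⟨g, ?_, ?_⟩
        · rw [Gseq_succ_pos x α hcond']; exact hg
        · rwa [habs] at hgarch
    · rw [Gseq_succ_neg x α hcond]
      refine ⟨⟨x α, hα⟩, ?_, arch_refl hα⟩
      have hmem : (⟨x α, hα⟩ : {y : K // 0 < y}) ∈ ratPowers |x α| := by
        refine ⟨1, 1, one_pos, ?_⟩
        show (x α) ^ 1 = |x α| ^ (1 : ℤ)
        rw [pow_one, zpow_one, habs]
      exact Subgroup.mem_sup_right hmem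
  obtain ⟨i1, hi1, hxi1⟩ := hsurj y
  obtain ⟨i2, hi2, hxi2⟩ := hsurj (2 * y)
  have hne12 : i1 ≠ i2 := by
    rintro rfl
    rw [hxi1] at hxi2
    nlinarith
  set α := min i1 i2 with hα
  have hsucc : Order.succ α < κ :=
    lt_of_le_of_lt (Order.succ_le_of_lt (min_lt_max.2 hne12)) (max_lt hi1 hi2)
  have hxcase : x α = y ∨ x α = 2 * y := by
    rcases min_choice i1 i2 with h | h
    · left; rw [hα, h, hxi1]
    · right; rw [hα, h, hxi2]
  have hxpos : 0 < x α := by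
    rcases hxcase with h | h <;> rw [h] <;> nlinarith
  have hyxα : ArchEquiv K y (x α) := by
    rcases hxcase with h | h
    · rw [h]; exact arch_refl hy
    · rw [h]; exact ⟨3, by push_cast; nlinarith, by push_cast; nlinarith⟩
  obtain ⟨g, hgmem, hgarch⟩ := hex α hxpos
  have hgG : g ∈ G := (hGmem g).2 ⟨⟨Order.succ α, hsucc⟩, hgmem⟩
  have harch : ArchEquiv K y (g : K) := arch_trans hyxα hgarch
  refine ⟨g, ⟨hgG, harch⟩, ?_⟩
  rintro g' ⟨hg'G, harch'⟩
  have h12 : ArchEquiv K (g' : K) ((g : K)) := arch_trans (arch_symm harch') harch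
  have h13 : ArchEquiv K ((g' * g⁻¹ : {z : K // 0 < z}) : K) 1 := by
    have h14 := arch_mul_right (inv_pos.2 g.2) h12
    rw [mul_inv_cancel₀ g.2.ne'] at h14
    exact h14
  have h15 : g' * g⁻¹ = 1 :=
    hGood2 _ (mul_mem hg'G (inv_mem hgG)) h13
  exact mul_inv_eq_one.1 h15
end
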